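/- There is a bijection Θ between the set [1_n] of connected non-crossing linked partitions of {1,...,n} and the set T(n) of planar rooted trees with n vertices, obtained by sending each block (i_1,...,i_s) of π to an elementary tree with root labeled i_1 and offsprings labeled i_2,...,i_s, where vertices of the tree are labeled 1,...,n in depth-first (left-first) order. -/

import Mathlib

open scoped Classical


/-- Two blocks `B`, `C` cross: there are `i < k < p < q` with `i, p ∈ B` and `k, q ∈ C`. -/
def Crosses {n : ℕ} (B C : Finset (Fin n)) : Prop :=
  ∃ i k p q : Fin n, i < k ∧ k < p ∧ p < q ∧ i ∈ B ∧ p ∈ B ∧ k ∈ C ∧ q ∈ C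

/-- `π` is a non-crossing linked partition of `{1, …, n}` (encoded as `Fin n`):
its (nonempty) blocks cover `Fin n`, are pairwise non-crossing, any two distinct blocks
intersect in at most one element, and if two distinct blocks intersect in `{j}` then both
blocks have at least two elements and `j` is the minimal element of exactly one of them. -/
def IsNCL (n : ℕ) (π : Finset (Finset (Fin n))) : Prop :=
  (∀ B ∈ π, B.Nonempty) ∧
  (∀ x : Fin n, ∃ B ∈ π, x ∈ B) ∧
  (∀ B ∈ π, ∀ C ∈ π, B ≠ C → ¬ Crosses B C) ∧
  (∀ B ∈ π, ∀ C ∈ π, B ≠ C → (B ∩ C).card ≤ 1 ∧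
    ∀ j : Fin n, B ∩ C = {j} →
      2 ≤ B.card ∧ 2 ≤ C.card ∧
        Xor' (B.min = (j : WithBot (Fin n))) (C.min = (j : WithBot (Fin n))))

/-- `π` is a non-crossing partition: a non-crossing linked partition with pairwise
disjoint blocks. -/
def IsNC (n : ℕ) (π : Finset (Finset (Fin n))) : Prop :=
  IsNCL n π ∧ ∀ B ∈ π, ∀ C ∈ π, B ≠ C → Disjoint B C

/-- `Refines n σ π` (i.e. `σ ⪯ π`): every block of `π` is a union of blocks of `σ`. -/
def Refines (n : ℕ) (σ π : Finset (Finset (Fin n))) : Prop :=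
  ∀ B ∈ π, ∃ S : Finset (Finset (Fin n)), S ⊆ σ ∧ B = S.sup id

/-- `a` and `b` lie in a common block of `π`. -/
def Linked {n : ℕ} (π : Finset (Finset (Fin n))) (a b : Fin n) : Prop :=
  ∃ B ∈ π, a ∈ B ∧ b ∈ B

/-- `a` and `b` are connected in `π`: joined by a chain of pairwise intersecting blocks. -/
def Connected {n : ℕ} (π : Finset (Finset (Fin n))) (a b : Fin n) : Prop :=
  Relation.ReflTransGen (Linked π) a b

/-- The partition `c(π)` of `Fin n` into the connected components of `π`. -/
noncomputable def cPart (n : ℕ) (π : Finset (Finset (Fin n))) : Finset (Finset (Fin n)) :=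
  Finset.univ.image fun i => Finset.univ.filter (Connected π i)

/-- Embedding of the unbarred copy: `i ↦ 2 i` in the interleaved order
`1, 1̄, 2, 2̄, …, n, n̄`. -/
def ueEmb (n : ℕ) (i : Fin n) : Fin (2 * n) := ⟨2 * i.1, by have := i.isLt; omega⟩

/-- Embedding of the barred copy: `i ↦ 2 i + 1` in the interleaved order. -/
def beEmb (n : ℕ) (i : Fin n) : Fin (2 * n) := ⟨2 * i.1 + 1, by have := i.isLt; omega⟩

/-- The union `γ ∪ γ'` inside the interleaved ordered set `1, 1̄, 2, 2̄, …, n, n̄`. -/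
def interleave (n : ℕ) (γ γ' : Finset (Finset (Fin n))) : Finset (Finset (Fin (2 * n))) :=
  γ.image (Finset.image (ueEmb n)) ∪ γ'.image (Finset.image (beEmb n))

/-- `γ'` is the Kreweras complement of `γ`: the largest non-crossing partition (in the
refinement order) such that `γ ∪ γ'` is non-crossing in the interleaved order. -/
def IsKr (n : ℕ) (γ γ' : Finset (Finset (Fin n))) : Prop :=
  IsNC n γ' ∧ IsNC (2 * n) (interleave n γ γ') ∧
  ∀ τ, IsNC n τ → IsNC (2 * n) (interleave n γ τ) → Refines n τ γ'

/-- `B` is an exterior block of `γ`: no other block `D` of `γ` contains elements `l, s`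
with `l = min B`, or `l < min B` and `max B < s`. -/
def IsExteriorIn (n : ℕ) (γ : Finset (Finset (Fin n))) (B : Finset (Fin n)) : Prop :=
  B ∈ γ ∧ ∀ D ∈ γ, D ≠ B → ∀ l ∈ D, ∀ s ∈ D,
    ¬((l ∈ B ∧ ∀ b ∈ B, l ≤ b) ∨ (∀ b ∈ B, l < b ∧ b < s))

/-- Halving map `Fin (2n) → Fin n`. -/
def halfEmb (n : ℕ) (i : Fin (2 * n)) : Fin n := ⟨i.1 / 2, by have := i.isLt; omega⟩

/-- `γ₋`: the restriction of `γ ∈ NC(2n)` to the odd elements `{1, 3, …, 2n − 1}`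
(indices `≡ 0 mod 2` in the `0`-based encoding), identified with a partition of `Fin n`. -/
noncomputable def minusPart (n : ℕ) (γ : Finset (Finset (Fin (2 * n)))) :
    Finset (Finset (Fin n)) :=
  (γ.filter fun B => ∀ i ∈ B, i.1 % 2 = 0).image (Finset.image (halfEmb n))

/-- `γ₊`: the restriction of `γ ∈ NC(2n)` to the even elements `{2, 4, …, 2n}`,
identified with a partition of `Fin n`. -/
noncomputable def plusPart (n : ℕ) (γ : Finset (Finset (Fin (2 * n)))) :
    Finset (Finset (Fin n)) :=
  (γ.filter fun B => ∀ i ∈ B, i.1 % 2 = 1).image (Finset.image (halfEmb n))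

/-- `γ ∈ NC_s(2n)`: a non-crossing partition of `{1, …, 2n}` all of whose blocks have
elements of constant parity, with `γ₊ = Kr(γ₋)`. -/
def NCs (n : ℕ) (γ : Finset (Finset (Fin (2 * n)))) : Prop :=
  IsNC (2 * n) γ ∧
  (∀ B ∈ γ, (∀ i ∈ B, i.1 % 2 = 0) ∨ (∀ i ∈ B, i.1 % 2 = 1)) ∧
  IsKr n (minusPart n γ) (plusPart n γ)

/-- The restriction of `γ` to a subset `S`. -/
noncomputable def restrictTo (n : ℕ) (γ : Finset (Finset (Fin n))) (S : Finset (Fin n)) :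
    Finset (Finset (Fin n)) :=
  (γ.image fun B => B ∩ S).filter Finset.Nonempty

/-- A planar rooted tree: a root together with a linearly ordered (left to right) list of
subtrees. -/
inductive PTree where
  | node : List PTree → PTree

mutual
/-- Number of vertices of a planar rooted tree. -/
def PTree.size : PTree → ℕ
  | .node ts => 1 + sizeList ts
def sizeList : List PTree → ℕ
  | [] => 0
  | t :: ts => PTree.size t + sizeList ts
end

/-- Depth-first indices of the roots of a list of trees, the first root getting index `k`. -/
def childRoots : List PTree → ℕ → List ℕ
  | [], _ => []
  | t :: ts, k => k :: childRoots ts (k + PTree.size t)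

mutual
/-- The blocks of the constituent elementary trees (a root together with its offsprings,
provided there is at least one offspring) of a planar tree, with vertices numbered in
depth-first (left-first) order starting at `k`. -/
def PTree.blk : PTree → ℕ → List (List ℕ)
  | .node ts, k =>
      (if ts.isEmpty then [] else [k :: childRoots ts (k + 1)]) ++ blkList ts (k + 1)
def blkList : List PTree → ℕ → List (List ℕ)
  | [], _ => []
  | t :: ts, k => PTree.blk t k ++ blkList ts (k + PTree.size t)
end

/-- The blocks of the elementary trees constituting a planar tree, in depth-first
numbering starting at `0`; a single vertex is itself an elementary tree. -/
def treeBlocks : PTree → List (List ℕ)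
  | .node [] => [[0]]
  | t => t.blk 0

/-- Convert a list of (`0`-based) vertex numbers into a block of `Fin n`. -/
def listToBlock (n : ℕ) (l : List ℕ) : Finset (Fin n) :=
  (l.filterMap fun i => if h : i < n then some (⟨i, h⟩ : Fin n) else none).toFinset

mutual
/-- Evaluation of a planar rooted tree: the product over its vertices of `f k`, where `k`
is the number of offsprings of the vertex (so an elementary tree with `m` vertices
contributes `f (m − 1)`). -/
def PTree.eval (f : ℕ → ℂ) : PTree → ℂ
  | .node ts => f ts.length * evalList f ts
def evalList (f : ℕ → ℂ) : List PTree → ℂ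
  | [] => 1
  | t :: ts => PTree.eval f t * evalList f ts
end

/-- A bicolor planar rooted tree: each subtree carries a color (`true` = color 1,
`false` = color 0). -/
inductive BTree where
  | node : List (Bool × BTree) → BTree

mutual
/-- Number of vertices of a bicolor planar tree. -/
def BTree.size : BTree → ℕ
  | .node ts => 1 + bsizeList ts
def bsizeList : List (Bool × BTree) → ℕ
  | [] => 0
  | (_, t) :: ts => BTree.size t + bsizeList ts
end

mutual
/-- Validity of a bicolor planar tree: at every vertex, the offsprings of color 1 precede
the offsprings of color 0. -/
def BTree.Valid : BTree → Prop
  | .node ts => List.Chain' (fun a b => b ≤ a) (ts.map Prod.fst) ∧ bvalidList ts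
def bvalidList : List (Bool × BTree) → Prop
  | [] => True
  | (_, t) :: ts => BTree.Valid t ∧ bvalidList ts
end

/-- A bicolor tree is elementary when all offsprings of the root are leaves. -/
def BTree.IsElementary : BTree → Prop
  | .node ts => ∀ p ∈ ts, p.2 = BTree.node []
/-- The term `t_π[X_1, …, X_n]`: the product over blocks `B = (i_1 < … < i_l)` of `π` of
`t_{l−1}(X_{i_1}, …, X_{i_l})`, times the product over `k ∈ s(π)` (the elements that are
not the minimal element of any block) of `t_0(X_k)`. Here `t m` stands for `t_{m−1}`,
taking `m` arguments. -/
noncomputable def tTerm {A : Type*} [Ring A] (t : ∀ m : ℕ, (Fin m → A) → ℂ)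
    (n : ℕ) (π : Finset (Finset (Fin n))) (X : Fin n → A) : ℂ :=
  (∏ B ∈ π, t B.card fun j => X (B.orderIsoOfFin rfl j).1) *
  ∏ k ∈ Finset.univ.filter
      (fun k : Fin n => ∀ B ∈ π, B.min ≠ (k : WithBot (Fin n))),
    t 1 fun _ => X k

/-- The family `t` satisfies the defining recurrence of the `t`-coefficients:
`φ(X_1 ⋯ X_n) = Σ_{π ∈ NCL(n)} t_π[X_1, …, X_n]`. -/
def TRec {A : Type*} [Ring A] [Algebra ℂ A] (φ : A →ₗ[ℂ] ℂ)
    (t : ∀ m : ℕ, (Fin m → A) → ℂ) : Prop :=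
  ∀ (n : ℕ) (X : Fin (n + 1) → A),
    φ (List.ofFn X).prod =
      ∑ π ∈ Finset.univ.filter (fun π => IsNCL (n + 1) π), tTerm t (n + 1) π X

/-- The term `κ_γ[X_1, …, X_n]`: the product over blocks `B = (i_1 < … < i_l)` of `γ` of
`κ_l(X_{i_1}, …, X_{i_l})`. -/
noncomputable def cumTerm {A : Type*} [Ring A] (κ : ∀ m : ℕ, (Fin m → A) → ℂ)
    (n : ℕ) (γ : Finset (Finset (Fin n))) (X : Fin n → A) : ℂ :=
  ∏ B ∈ γ, κ B.card fun j => X (B.orderIsoOfFin rfl j).1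

/-- The family `κ` satisfies the moment–cumulant recurrence
`φ(X_1 ⋯ X_n) = Σ_{γ ∈ NC(n)} κ_γ[X_1, …, X_n]` defining the free cumulants. -/
def CumRec {A : Type*} [Ring A] [Algebra ℂ A] (φ : A →ₗ[ℂ] ℂ)
    (κ : ∀ m : ℕ, (Fin m → A) → ℂ) : Prop :=
  ∀ (n : ℕ) (X : Fin (n + 1) → A),
    φ (List.ofFn X).prod =
      ∑ γ ∈ Finset.univ.filter (fun γ => IsNC (n + 1) γ), cumTerm κ (n + 1) γ X

/-- Free independence of a family of unital subalgebras: alternating products of centered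
elements have vanishing expectation. -/
def FreeFamily {A : Type*} [Ring A] [Algebra ℂ A] (φ : A →ₗ[ℂ] ℂ) {I : Type*}
    (S : I → Subalgebra ℂ A) : Prop :=
  ∀ (n : ℕ) (a : Fin (n + 1) → A) (idx : Fin (n + 1) → I),
    (∀ k, a k ∈ S (idx k)) → (∀ k, φ (a k) = 0) →
    (∀ k : Fin n, idx k.castSucc ≠ idx k.succ) →
    φ (List.ofFn a).prod = 0

/-- Two elements are free if the unital subalgebras they generate are free. -/
def FreePair {A : Type*} [Ring A] [Algebra ℂ A] (φ : A →ₗ[ℂ] ℂ) (X Y : A) : Prop :=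
  FreeFamily φ fun b : Bool =>
    if b = true then Algebra.adjoin ℂ {X} else Algebra.adjoin ℂ {Y}


/-! ### Auxiliary development -/

namespace NCLAux

/-- Crossing at the level of `ℕ`. -/
def NCross (B C : Finset ℕ) : Prop :=
  ∃ i k p q : ℕ, i < k ∧ k < p ∧ p < q ∧ i ∈ B ∧ p ∈ B ∧ k ∈ C ∧ q ∈ C

def NLinked (Γ : Finset (Finset ℕ)) (a b : ℕ) : Prop :=
  ∃ B ∈ Γ, a ∈ B ∧ b ∈ B

def NConnected (Γ : Finset (Finset ℕ)) (a b : ℕ) : Prop :=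
  Relation.ReflTransGen (NLinked Γ) a b

/-- The spans (root, size) of the subtrees of a forest with first root `k`. -/
def subSpans : List PTree → ℕ → List (ℕ × ℕ)
  | [], _ => []
  | t :: ts, k => (k, t.size) :: subSpans ts (k + t.size)

/-- ℕ-level blocks of a list of blocks. -/
def nBlocks (S : List (List ℕ)) : Finset (Finset ℕ) :=
  (S.map List.toFinset).toFinset

@[simp] lemma mem_nBlocks {B : Finset ℕ} {S : List (List ℕ)} :
    B ∈ nBlocks S ↔ ∃ l ∈ S, l.toFinset = B := by
  simp [nBlocks]

@[simp] lemma nBlocks_nil : nBlocks [] = ∅ := rfl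

@[simp] lemma nBlocks_append (S S' : List (List ℕ)) :
    nBlocks (S ++ S') = nBlocks S ∪ nBlocks S' := by
  ext B; simp [nBlocks, or_and_right, exists_or]

@[simp] lemma nBlocks_cons (l : List ℕ) (S : List (List ℕ)) :
    nBlocks (l :: S) = insert l.toFinset (nBlocks S) := by
  ext B; simp [nBlocks, eq_comm]

lemma blk_node (ts : List PTree) (k : ℕ) :
    PTree.blk (.node ts) k
      = (if ts.isEmpty then [] else [k :: childRoots ts (k + 1)]) ++ blkList ts (k + 1) := by
  simp [PTree.blk]

lemma blkList_cons (t : PTree) (ts : List PTree) (k : ℕ) :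
    blkList (t :: ts) k = PTree.blk t k ++ blkList ts (k + t.size) := by
  simp [blkList]

@[simp] lemma blkList_nil (k : ℕ) : blkList [] k = [] := by simp [blkList]

lemma size_node (ts : List PTree) : (PTree.node ts).size = 1 + sizeList ts := by
  simp [PTree.size]

@[simp] lemma sizeList_nil : sizeList [] = 0 := by simp [sizeList]

lemma sizeList_cons (t : PTree) (ts : List PTree) :
    sizeList (t :: ts) = t.size + sizeList ts := by simp [sizeList]

lemma size_pos (T : PTree) : 1 ≤ T.size := by
  cases T with | node ts => simp [size_node]

lemma sizeList_eq_zero {ts : List PTree} (h : sizeList ts = 0) : ts = [] := by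
  cases ts with
  | nil => rfl
  | cons t ts => exfalso; have := size_pos t; rw [sizeList_cons] at h; omega

lemma subSpans_ge {ts : List PTree} {k r s : ℕ} (h : (r, s) ∈ subSpans ts k) :
    k ≤ r ∧ r + s ≤ k + sizeList ts ∧ 1 ≤ s := by
  induction ts generalizing k with
  | nil => simp [subSpans] at h
  | cons t ts ih =>
    rw [subSpans] at h
    rcases List.mem_cons.1 h with h | h
    · obtain ⟨rfl, rfl⟩ := Prod.mk.injEq .. ▸ (by exact Prod.mk.inj (h ▸ rfl) : r = k ∧ s = t.size)
      exact ⟨le_rfl, by rw [sizeList_cons]; omega, size_pos t⟩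
    · have := ih h
      rw [sizeList_cons]
      have := size_pos t
      omega

lemma childRoots_eq_map (ts : List PTree) (k : ℕ) :
    childRoots ts k = (subSpans ts k).map Prod.fst := by
  induction ts generalizing k with
  | nil => simp [childRoots, subSpans]
  | cons t ts ih => simp [childRoots, subSpans, ih]

lemma mem_childRoots_iff {ts : List PTree} {k c : ℕ} :
    c ∈ childRoots ts k ↔ ∃ s, (c, s) ∈ subSpans ts k := by
  rw [childRoots_eq_map]
  constructor
  · intro h
    rcases List.mem_map.1 h with ⟨⟨r, s⟩, hm, he⟩
    exact ⟨s, by simpa [← he] using hm⟩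
  · rintro ⟨s, hm⟩
    exact List.mem_map.2 ⟨(c, s), hm, rfl⟩

lemma childRoots_ge {ts : List PTree} {k c : ℕ} (h : c ∈ childRoots ts k) :
    k ≤ c ∧ c < k + sizeList ts := by
  rw [mem_childRoots_iff] at h
  obtain ⟨s, hs⟩ := h
  have := subSpans_ge hs
  omega

lemma subSpans_gap {ts : List PTree} {k r s c : ℕ} (h : (r, s) ∈ subSpans ts k)
    (hc : c ∈ childRoots ts k) (hlt : r < c) : r + s ≤ c := by
  induction ts generalizing k with
  | nil => simp [subSpans] at h
  | cons t ts ih =>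
    rw [subSpans] at h
    rw [childRoots] at hc
    rcases List.mem_cons.1 h with h | h
    · have hr : r = k ∧ s = t.size := by
        constructor <;> [exact congrArg Prod.fst h; exact congrArg Prod.snd h]
      obtain ⟨rfl, rfl⟩ := hr
      rcases List.mem_cons.1 hc with rfl | hc
      · omega
      · have := childRoots_ge hc; omega
    · rcases List.mem_cons.1 hc with rfl | hc
      · have := subSpans_ge h; omega
      · exact ih h hc

lemma subSpans_root_eq {ts : List PTree} {k r s c : ℕ} (h : (r, s) ∈ subSpans ts k)
    (hc : c ∈ childRoots ts k) (h1 : r ≤ c) (h2 : c < r + s) : c = r := by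
  rcases lt_or_eq_of_le h1 with hlt | rfl
  · exact absurd (subSpans_gap h hc hlt) (by omega)
  · rfl

lemma childRoots_sorted (ts : List PTree) (k : ℕ) :
    (childRoots ts k).Chain' (· < ·) := by
  induction ts generalizing k with
  | nil => exact List.isChain_nil
  | cons t ts ih =>
    rw [childRoots]
    refine List.isChain_cons.2 ⟨?_, ih _⟩
    intro y hy
    have := childRoots_ge (List.mem_of_mem_head? hy)
    have := size_pos t
    omega

lemma head_mem_childRoots {ts : List PTree} (h : ts ≠ []) (k : ℕ) :
    k ∈ childRoots ts k := by
  cases ts with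
  | nil => exact absurd rfl h
  | cons t ts => rw [childRoots]; exact List.mem_cons_self

lemma NConnected.mono {Γ Γ' : Finset (Finset ℕ)} (h : Γ ⊆ Γ') {a b : ℕ}
    (hc : NConnected Γ a b) : NConnected Γ' a b :=
  Relation.ReflTransGen.mono (r := NLinked Γ) (p := NLinked Γ') (fun x y ⟨B, hB, hx, hy⟩ => ⟨B, h hB, hx, hy⟩) a b hc

lemma min_eq_coe {B : Finset ℕ} {j : ℕ} (hj : j ∈ B) (h : ∀ x ∈ B, j ≤ x) :
    B.min = (j : WithTop ℕ) :=
  le_antisymm (Finset.min_le hj) (Finset.le_min fun x hx => WithTop.coe_le_coe.2 (h x hx))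

end NCLAux

namespace NCLAux

/-- Connected NCL partition of the interval `[a, a+N)`, at the level of `ℕ`. -/
structure Good (a N : ℕ) (Γ : Finset (Finset ℕ)) : Prop where
  nonempty : ∀ B ∈ Γ, B.Nonempty
  sub : ∀ B ∈ Γ, ∀ x ∈ B, a ≤ x ∧ x < a + N
  cover : ∀ x, a ≤ x → x < a + N → ∃ B ∈ Γ, x ∈ B
  nocross : ∀ B ∈ Γ, ∀ C ∈ Γ, B ≠ C → ¬ NCross B C
  card_inter : ∀ B ∈ Γ, ∀ C ∈ Γ, B ≠ C → (B ∩ C).card ≤ 1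
  inter : ∀ B ∈ Γ, ∀ C ∈ Γ, B ≠ C → ∀ j : ℕ, B ∩ C = {j} →
    2 ≤ B.card ∧ 2 ≤ C.card ∧ Xor' (B.min = (j : WithTop ℕ)) (C.min = (j : WithTop ℕ))
  conn : ∀ x y, a ≤ x → x < a + N → a ≤ y → y < a + N → NConnected Γ x y

/-- Invariant for the blocks of `T.blk k`. -/
structure TGood (k N : ℕ) (Δ : Finset (Finset ℕ)) : Prop where
  sub : ∀ B ∈ Δ, ∀ x ∈ B, k ≤ x ∧ x < k + N
  two : ∀ B ∈ Δ, 2 ≤ B.card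
  mins : ∀ B ∈ Δ, ∀ C ∈ Δ, B ≠ C → B.min ≠ C.min
  common : ∀ B ∈ Δ, ∀ C ∈ Δ, B ≠ C → ∀ x, x ∈ B → x ∈ C →
    B.min = (x : WithTop ℕ) ∨ C.min = (x : WithTop ℕ)
  nocross : ∀ B ∈ Δ, ∀ C ∈ Δ, B ≠ C → ¬ NCross B C
  cover : ∀ m, k < m → m < k + N → ∃ B ∈ Δ, m ∈ B
  root : 1 < N → ∃ B ∈ Δ, k ∈ B
  conn : ∀ x, k ≤ x → x < k + N → NConnected Δ x k

/-- Invariant for the blocks of `blkList ts k`. -/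
structure FGood (ts : List PTree) (k : ℕ) (Δ : Finset (Finset ℕ)) : Prop where
  sub : ∀ B ∈ Δ, ∀ x ∈ B, k ≤ x ∧ x < k + sizeList ts
  two : ∀ B ∈ Δ, 2 ≤ B.card
  mins : ∀ B ∈ Δ, ∀ C ∈ Δ, B ≠ C → B.min ≠ C.min
  common : ∀ B ∈ Δ, ∀ C ∈ Δ, B ≠ C → ∀ x, x ∈ B → x ∈ C →
    B.min = (x : WithTop ℕ) ∨ C.min = (x : WithTop ℕ)
  nocross : ∀ B ∈ Δ, ∀ C ∈ Δ, B ≠ C → ¬ NCross B C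
  loc : ∀ B ∈ Δ, ∃ r s, (r, s) ∈ subSpans ts k ∧ ∀ x ∈ B, r ≤ x ∧ x < r + s
  cover : ∀ m, k ≤ m → m < k + sizeList ts → m ∈ childRoots ts k ∨ ∃ B ∈ Δ, m ∈ B
  conn : ∀ x, k ≤ x → x < k + sizeList ts → ∃ r ∈ childRoots ts k, NConnected Δ x r

end NCLAux

namespace NCLAux

lemma exists_min_coe {B : Finset ℕ} (hB : B.Nonempty) : ∃ b ∈ B, B.min = (b : WithTop ℕ) :=
  ⟨B.min' hB, B.min'_mem hB, (Finset.coe_min' hB).symm⟩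

theorem fgood_step (t : PTree) (ts : List PTree) (k : ℕ)
    (F1 : TGood k t.size (nBlocks (t.blk k)))
    (F2 : FGood ts (k + t.size) (nBlocks (blkList ts (k + t.size)))) :
    FGood (t :: ts) k (nBlocks (blkList (t :: ts) k)) := by
  rw [blkList_cons, nBlocks_append]
  set Δ1 := nBlocks (t.blk k) with hΔ1
  set Δ2 := nBlocks (blkList ts (k + t.size)) with hΔ2
  have hr1 : ∀ B ∈ Δ1, ∀ x ∈ B, k ≤ x ∧ x < k + t.size := F1.sub
  have hr2 : ∀ B ∈ Δ2, ∀ x ∈ B, k + t.size ≤ x ∧ x < k + t.size + sizeList ts := F2.sub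
  have htwo : ∀ B ∈ Δ1 ∪ Δ2, 2 ≤ B.card := by
    intro B hB
    rcases Finset.mem_union.1 hB with h | h
    · exact F1.two B h
    · exact F2.two B h
  have hne : ∀ B ∈ Δ1 ∪ Δ2, B.Nonempty := fun B hB =>
    Finset.card_pos.1 (by have := htwo B hB; omega)
  constructor
  · intro B hB x hx
    rw [sizeList_cons]
    rcases Finset.mem_union.1 hB with h | h
    · have := hr1 B h x hx; omega
    · have := hr2 B h x hx; omega
  · exact htwo
  · -- mins
    intro B hB C hC hne'
    rcases Finset.mem_union.1 hB with h1 | h1 <;> rcases Finset.mem_union.1 hC with h2 | h2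
    · exact F1.mins B h1 C h2 hne'
    · obtain ⟨b, hb, hbm⟩ := exists_min_coe (hne B hB)
      obtain ⟨c, hc, hcm⟩ := exists_min_coe (hne C hC)
      rw [hbm, hcm]
      intro h
      have : b = c := by exact_mod_cast h
      subst this
      have := hr1 B h1 b hb
      have := hr2 C h2 b hc
      omega
    · obtain ⟨b, hb, hbm⟩ := exists_min_coe (hne B hB)
      obtain ⟨c, hc, hcm⟩ := exists_min_coe (hne C hC)
      rw [hbm, hcm]
      intro h
      have : b = c := by exact_mod_cast h
      subst this
      have := hr2 B h1 b hb
      have := hr1 C h2 b hc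
      omega
    · exact F2.mins B h1 C h2 hne'
  · -- common
    intro B hB C hC hne' x hxB hxC
    rcases Finset.mem_union.1 hB with h1 | h1 <;> rcases Finset.mem_union.1 hC with h2 | h2
    · exact F1.common B h1 C h2 hne' x hxB hxC
    · exfalso; have := hr1 B h1 x hxB; have := hr2 C h2 x hxC; omega
    · exfalso; have := hr2 B h1 x hxB; have := hr1 C h2 x hxC; omega
    · exact F2.common B h1 C h2 hne' x hxB hxC
  · -- nocross
    intro B hB C hC hne'
    rintro ⟨i, k', p, q, h1, h2, h3, h4, h5, h6, h7⟩
    rcases Finset.mem_union.1 hB with hB1 | hB1 <;> rcases Finset.mem_union.1 hC with hC1 | hC1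
    · exact F1.nocross B hB1 C hC1 hne' ⟨i, k', p, q, h1, h2, h3, h4, h5, h6, h7⟩
    · have := hr1 B hB1 p h5
      have := hr2 C hC1 k' h6
      omega
    · have := hr2 B hB1 i h4
      have := hr1 C hC1 k' h6
      omega
    · exact F2.nocross B hB1 C hC1 hne' ⟨i, k', p, q, h1, h2, h3, h4, h5, h6, h7⟩
  · -- loc
    intro B hB
    rcases Finset.mem_union.1 hB with h | h
    · exact ⟨k, t.size, by rw [subSpans]; exact List.mem_cons_self, hr1 B h⟩
    · obtain ⟨r, s, hrs, hb⟩ := F2.loc B h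
      exact ⟨r, s, by rw [subSpans]; exact List.mem_cons_of_mem _ hrs, hb⟩
  · -- cover
    intro m hm1 hm2
    rw [sizeList_cons] at hm2
    by_cases hcase : m < k + t.size
    · rcases Nat.eq_or_lt_of_le hm1 with rfl | hlt
      · left; rw [childRoots]; exact List.mem_cons_self
      · obtain ⟨B, hB, hmB⟩ := F1.cover m hlt hcase
        exact Or.inr ⟨B, Finset.mem_union_left _ hB, hmB⟩
    · rcases F2.cover m (by omega) (by omega) with h | ⟨B, hB, hmB⟩
      · left; rw [childRoots]; exact List.mem_cons_of_mem _ h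
      · exact Or.inr ⟨B, Finset.mem_union_right _ hB, hmB⟩
  · -- conn
    intro x hx1 hx2
    rw [sizeList_cons] at hx2
    by_cases hcase : x < k + t.size
    · refine ⟨k, by rw [childRoots]; exact List.mem_cons_self, ?_⟩
      exact NConnected.mono Finset.subset_union_left (F1.conn x hx1 hcase)
    · obtain ⟨r, hr, hconn⟩ := F2.conn x (by omega) (by omega)
      refine ⟨r, by rw [childRoots]; exact List.mem_cons_of_mem _ hr, ?_⟩
      exact NConnected.mono Finset.subset_union_right hconn

theorem tgood_step (t : PTree) (ts : List PTree) (k : ℕ)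
    (F : FGood (t :: ts) (k + 1) (nBlocks (blkList (t :: ts) (k + 1)))) :
    TGood k (PTree.node (t :: ts)).size (nBlocks (PTree.blk (.node (t :: ts)) k)) := by
  have hblk : PTree.blk (.node (t :: ts)) k
      = (k :: childRoots (t :: ts) (k + 1)) :: blkList (t :: ts) (k + 1) := by
    rw [blk_node]; simp
  rw [hblk, nBlocks_cons, size_node]
  set M := sizeList (t :: ts) with hM
  set R := (k :: childRoots (t :: ts) (k + 1)).toFinset with hR
  set Δ := nBlocks (blkList (t :: ts) (k + 1)) with hΔ
  have hmemR : ∀ x, x ∈ R ↔ x = k ∨ x ∈ childRoots (t :: ts) (k + 1) := by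
    intro x; simp [hR]
  have hkR : k ∈ R := (hmemR k).2 (Or.inl rfl)
  have hRrange : ∀ x ∈ R, k ≤ x ∧ x < k + 1 + M := by
    intro x hx
    rcases (hmemR x).1 hx with rfl | hx
    · have : 0 < M := by
        rw [hM, sizeList_cons]; have := size_pos t; omega
      omega
    · have := childRoots_ge hx; omega
  have hRmin : R.min = (k : WithTop ℕ) := by
    apply min_eq_coe hkR
    intro x hx; exact (hRrange x hx).1
  have hk1R : (k + 1) ∈ R := (hmemR _).2 (Or.inr (head_mem_childRoots (by simp) _))
  have hRtwo : 2 ≤ R.card := by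
    rw [show (2:ℕ) = 1 + 1 from rfl]
    apply Finset.one_lt_card.2
    exact ⟨k, hkR, k + 1, hk1R, by omega⟩
  have gap1 : ∀ x ∈ R, ∀ r s, (r, s) ∈ subSpans (t :: ts) (k + 1) →
      r ≤ x → x < r + s → x = r := by
    intro x hx r s hrs h1 h2
    rcases (hmemR x).1 hx with rfl | hx
    · have := subSpans_ge hrs; omega
    · exact subSpans_root_eq hrs hx h1 h2
  have gap2 : ∀ x ∈ R, ∀ r s, (r, s) ∈ subSpans (t :: ts) (k + 1) →
      r < x → r + s ≤ x := by
    intro x hx r s hrs h1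
    rcases (hmemR x).1 hx with rfl | hx
    · have := subSpans_ge hrs; omega
    · exact subSpans_gap hrs hx h1
  have hΔne : ∀ C ∈ Δ, C.Nonempty := fun C hC =>
    Finset.card_pos.1 (by have := F.two C hC; omega)
  have hΔmin : ∀ C ∈ Δ, ∀ r s, (r, s) ∈ subSpans (t :: ts) (k + 1) →
      (∀ x ∈ C, r ≤ x ∧ x < r + s) → r ∈ C → C.min = (r : WithTop ℕ) := by
    intro C hC r s _ hsub hr
    exact min_eq_coe hr fun x hx => (hsub x hx).1
  constructor
  · intro B hB x hx
    rcases Finset.mem_insert.1 hB with rfl | hB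
    · have := hRrange x hx; omega
    · have := F.sub B hB x hx
      rw [← hM] at this
      omega
  · intro B hB
    rcases Finset.mem_insert.1 hB with rfl | hB
    · exact hRtwo
    · exact F.two B hB
  · -- mins
    intro B hB C hC hBC
    rcases Finset.mem_insert.1 hB with rfl | hB <;> rcases Finset.mem_insert.1 hC with rfl | hC
    · exact absurd rfl hBC
    · rw [hRmin]
      obtain ⟨c, hc, hcm⟩ := exists_min_coe (hΔne C hC)
      rw [hcm]
      intro h
      have : k = c := by exact_mod_cast h
      have := F.sub C hC c hc
      omega
    · rw [hRmin]
      obtain ⟨c, hc, hcm⟩ := exists_min_coe (hΔne B hB)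
      rw [hcm]
      intro h
      have : c = k := by exact_mod_cast h
      have := F.sub B hB c hc
      omega
    · exact F.mins B hB C hC hBC
  · -- common
    intro B hB C hC hBC x hxB hxC
    rcases Finset.mem_insert.1 hB with rfl | hB <;> rcases Finset.mem_insert.1 hC with rfl | hC
    · exact absurd rfl hBC
    · obtain ⟨r, s, hrs, hsub⟩ := F.loc C hC
      have hxr : x = r := gap1 x hxB r s hrs (hsub x hxC).1 (hsub x hxC).2
      subst hxr
      exact Or.inr (hΔmin C hC x s hrs hsub hxC)
    · obtain ⟨r, s, hrs, hsub⟩ := F.loc B hB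
      have hxr : x = r := gap1 x hxC r s hrs (hsub x hxB).1 (hsub x hxB).2
      subst hxr
      exact Or.inl (hΔmin B hB x s hrs hsub hxB)
    · exact F.common B hB C hC hBC x hxB hxC
  · -- nocross
    intro B hB C hC hBC
    rintro ⟨i, k', p, q, h1, h2, h3, h4, h5, h6, h7⟩
    rcases Finset.mem_insert.1 hB with rfl | hB <;> rcases Finset.mem_insert.1 hC with rfl | hC
    · exact absurd rfl hBC
    · obtain ⟨r, s, hrs, hsub⟩ := F.loc C hC
      have hk' := hsub k' h6
      have hq := hsub q h7
      have : r + s ≤ p := gap2 p h5 r s hrs (by omega)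
      omega
    · obtain ⟨r, s, hrs, hsub⟩ := F.loc B hB
      have hi := hsub i h4
      have hp := hsub p h5
      have : r + s ≤ k' := gap2 k' h6 r s hrs (by omega)
      omega
    · exact F.nocross B hB C hC hBC ⟨i, k', p, q, h1, h2, h3, h4, h5, h6, h7⟩
  · -- cover
    intro m hm1 hm2
    rcases F.cover m (by omega) (by rw [← hM]; omega) with h | ⟨B, hB, hmB⟩
    · exact ⟨R, Finset.mem_insert_self _ _, (hmemR m).2 (Or.inr h)⟩
    · exact ⟨B, Finset.mem_insert_of_mem hB, hmB⟩
  · -- root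
    intro _
    exact ⟨R, Finset.mem_insert_self _ _, hkR⟩
  · -- conn
    intro x hx1 hx2
    rcases Nat.eq_or_lt_of_le hx1 with rfl | hlt
    · exact Relation.ReflTransGen.refl
    · obtain ⟨r, hr, hconn⟩ := F.conn x (by omega) (by rw [← hM]; omega)
      have h1 : NConnected (insert R Δ) x r :=
        NConnected.mono (Finset.subset_insert _ _) hconn
      exact h1.tail ⟨R, Finset.mem_insert_self _ _, (hmemR r).2 (Or.inr hr), hkR⟩
end NCLAux

namespace NCLAux

mutual
theorem tgood : ∀ (T : PTree) (k : ℕ), TGood k T.size (nBlocks (T.blk k))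
  | .node [], k => by
    have hb : PTree.blk (.node []) k = [] := by rw [blk_node]; simp
    rw [hb, size_node]
    constructor
    · simp
    · simp
    · simp
    · simp
    · simp
    · intro m h1 h2
      exfalso
      simp [sizeList] at h2
      omega
    · intro h
      exfalso
      simp [sizeList] at h
    · intro x h1 h2
      have : x = k := by simp [sizeList] at h2; omega
      subst this
      exact Relation.ReflTransGen.refl
  | .node (t :: ts), k => by
    have F := fgood (t :: ts) (k + 1)
    exact tgood_step t ts k F
theorem fgood : ∀ (ts : List PTree) (k : ℕ), FGood ts k (nBlocks (blkList ts k))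
  | [], k => by
    rw [blkList_nil]
    constructor
    · simp
    · simp
    · simp
    · simp
    · simp
    · simp
    · intro m h1 h2
      exfalso
      simp [sizeList] at h2
      omega
    · intro x h1 h2
      exfalso
      simp [sizeList] at h2
      omega
  | t :: ts, k => by
    have F1 := tgood t k
    have F2 := fgood ts (k + t.size)
    exact fgood_step t ts k F1 F2
end

end NCLAux

namespace NCLAux

/-- Blocks of the elementary subtrees, numbering starting at `a`. -/
def treeBlocksAt (T : PTree) (a : ℕ) : List (List ℕ) :=
  match T with
  | .node [] => [[a]]
  | T => T.blk a

lemma treeBlocks_eq (T : PTree) : treeBlocks T = treeBlocksAt T 0 := by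
  cases T with
  | node ts => cases ts with
    | nil => rfl
    | cons t ts => rfl

lemma treeBlocksAt_nil (a : ℕ) : treeBlocksAt (.node []) a = [[a]] := rfl

lemma treeBlocksAt_cons (t : PTree) (ts : List PTree) (a : ℕ) :
    treeBlocksAt (.node (t :: ts)) a = (PTree.node (t :: ts)).blk a := rfl

lemma NConnected.symm {Γ : Finset (Finset ℕ)} {a b : ℕ} (h : NConnected Γ a b) :
    NConnected Γ b a := by
  have hs : Symmetric (NLinked Γ) := by
    rintro x y ⟨B, hB, h1, h2⟩; exact ⟨B, hB, h2, h1⟩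
  haveI : Std.Symm (NLinked Γ) := ⟨fun _ _ hab => hs hab⟩
  exact Std.Symm.symm (r := Relation.ReflTransGen (NLinked Γ)) _ _ h

lemma coe_le_min {B : Finset ℕ} {x y : ℕ} (h : B.min = (x : WithTop ℕ)) (hy : y ∈ B) :
    x ≤ y := by
  have h2 := Finset.min_le hy
  rw [h] at h2
  exact WithTop.coe_le_coe.1 h2

theorem good_treeBlocksAt : ∀ (T : PTree) (a : ℕ), Good a T.size (nBlocks (treeBlocksAt T a))
  | .node [], a => by
    rw [treeBlocksAt_nil, size_node, sizeList_nil]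
    have hΓ : nBlocks [[a]] = {({a} : Finset ℕ)} := by
      simp [nBlocks]
    rw [hΓ]
    constructor
    · intro B hB; rw [Finset.mem_singleton] at hB; subst hB; exact ⟨_, Finset.mem_singleton_self _⟩
    · intro B hB x hx
      rw [Finset.mem_singleton] at hB; subst hB
      rw [Finset.mem_singleton] at hx; omega
    · intro x h1 h2
      have : x = a := by omega
      subst this
      exact ⟨_, Finset.mem_singleton_self _, Finset.mem_singleton_self x⟩
    · intro B hB C hC hBC
      rw [Finset.mem_singleton] at hB hC
      exact absurd (hB.trans hC.symm) hBC
    · intro B hB C hC hBC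
      rw [Finset.mem_singleton] at hB hC
      exact absurd (hB.trans hC.symm) hBC
    · intro B hB C hC hBC
      rw [Finset.mem_singleton] at hB hC
      exact absurd (hB.trans hC.symm) hBC
    · intro x y h1 h2 h3 h4
      have hx : x = a := by omega
      have hy : y = a := by omega
      subst hx; subst hy
      exact Relation.ReflTransGen.refl
  | .node (t :: ts), a => by
    rw [treeBlocksAt_cons]
    have G := tgood (.node (t :: ts)) a
    set N := (PTree.node (t :: ts)).size with hN
    have hN2 : 2 ≤ N := by
      rw [hN, size_node, sizeList_cons]
      have := size_pos t; omega
    set Δ := nBlocks ((PTree.node (t :: ts)).blk a) with hΔ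
    have hne : ∀ B ∈ Δ, B.Nonempty := fun B hB =>
      Finset.card_pos.1 (by have := G.two B hB; omega)
    constructor
    · exact hne
    · exact G.sub
    · intro x h1 h2
      rcases Nat.eq_or_lt_of_le h1 with rfl | hlt
      · exact G.root (by omega)
      · exact G.cover x hlt h2
    · exact G.nocross
    · -- card_inter
      intro B hB C hC hBC
      apply Finset.card_le_one.2
      intro x hx y hy
      rw [Finset.mem_inter] at hx hy
      rcases G.common B hB C hC hBC x hx.1 hx.2 with h1 | h1 <;>
        rcases G.common B hB C hC hBC y hy.1 hy.2 with h2 | h2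
      · have hxy : x ≤ y := coe_le_min h1 hy.1
        have hyx : y ≤ x := coe_le_min h2 hx.1
        omega
      · have hxy : x ≤ y := coe_le_min h1 hy.1
        have hyx : y ≤ x := coe_le_min h2 hx.2
        omega
      · have hxy : x ≤ y := coe_le_min h1 hy.2
        have hyx : y ≤ x := coe_le_min h2 hx.1
        omega
      · have hxy : x ≤ y := coe_le_min h1 hy.2
        have hyx : y ≤ x := coe_le_min h2 hx.2
        omega
    · -- inter
      intro B hB C hC hBC j hj
      have hjB : j ∈ B ∩ C := by rw [hj]; exact Finset.mem_singleton_self j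
      rw [Finset.mem_inter] at hjB
      refine ⟨G.two B hB, G.two C hC, ?_⟩
      have hmins := G.mins B hB C hC hBC
      rcases G.common B hB C hC hBC j hjB.1 hjB.2 with h | h
      · exact Or.inl ⟨h, fun hc => hmins (h.trans hc.symm)⟩
      · exact Or.inr ⟨h, fun hc => hmins (hc.trans h.symm)⟩
    · -- conn
      intro x y h1 h2 h3 h4
      exact (G.conn x h1 h2).trans (G.conn y h3 h4).symm

end NCLAux

namespace NCLAux

lemma blk_mem_nBlocks {T : PTree} {k : ℕ} {l : List ℕ} (h : l ∈ T.blk k) :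
    l.toFinset ∈ nBlocks (T.blk k) := mem_nBlocks.2 ⟨l, h, rfl⟩

lemma blk_range {T : PTree} {k : ℕ} {l : List ℕ} (h : l ∈ T.blk k) :
    ∀ x ∈ l, k ≤ x ∧ x < k + T.size := by
  intro x hx
  exact (tgood T k).sub _ (blk_mem_nBlocks h) x (List.mem_toFinset.2 hx)

lemma eq_of_sorted_toFinset {l l' : List ℕ} (h : l.Chain' (· < ·)) (h' : l'.Chain' (· < ·))
    (e : l.toFinset = l'.toFinset) : l = l' := by
  replace h := List.isChain_iff_pairwise.1 h
  replace h' := List.isChain_iff_pairwise.1 h'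
  have nd : l.Nodup := h.imp ne_of_lt
  have nd' : l'.Nodup := h'.imp ne_of_lt
  exact List.Perm.eq_of_pairwise' (h.imp le_of_lt) (h'.imp le_of_lt)
    (List.perm_of_nodup_nodup_toFinset_eq nd nd' e)

lemma rootList_sorted (ts : List PTree) (k : ℕ) :
    (k :: childRoots ts (k + 1)).Chain' (· < ·) := by
  refine List.isChain_cons.2 ⟨?_, childRoots_sorted _ _⟩
  intro y hy
  have := childRoots_ge (List.mem_of_mem_head? hy)
  omega

mutual
theorem blk_inj : ∀ (T T' : PTree) (k : ℕ), T.size = T'.size →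
    nBlocks (T.blk k) = nBlocks (T'.blk k) → T = T'
  | .node [], .node [], _, _, _ => rfl
  | .node [], .node (t' :: ts'), k, hs, _ => by
    exfalso
    rw [size_node, size_node, sizeList_nil, sizeList_cons] at hs
    have := size_pos t'
    omega
  | .node (t :: ts), .node [], k, hs, _ => by
    exfalso
    rw [size_node, size_node, sizeList_nil, sizeList_cons] at hs
    have := size_pos t
    omega
  | .node (t :: ts), .node (t' :: ts'), k, hs, hb => by
    have hblk : ∀ (u : PTree) (us : List PTree),
        PTree.blk (.node (u :: us)) k
          = (k :: childRoots (u :: us) (k + 1)) :: blkList (u :: us) (k + 1) := by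
      intro u us; rw [blk_node]; simp
    rw [hblk, hblk, nBlocks_cons, nBlocks_cons] at hb
    set R := (k :: childRoots (t :: ts) (k + 1)) with hRdef
    set R' := (k :: childRoots (t' :: ts') (k + 1)) with hR'def
    set Δ := nBlocks (blkList (t :: ts) (k + 1)) with hΔdef
    set Δ' := nBlocks (blkList (t' :: ts') (k + 1)) with hΔ'def
    have hΔk : ∀ B ∈ Δ, k ∉ B := by
      intro B hB hk
      have := (fgood (t :: ts) (k + 1)).sub B hB k hk
      omega
    have hΔ'k : ∀ B ∈ Δ', k ∉ B := by
      intro B hB hk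
      have := (fgood (t' :: ts') (k + 1)).sub B hB k hk
      omega
    have hkR : k ∈ R.toFinset := by simp [hRdef]
    have hRR' : R.toFinset = R'.toFinset := by
      have h1 : R.toFinset ∈ insert R'.toFinset Δ' := by
        rw [← hb]; exact Finset.mem_insert_self _ _
      rcases Finset.mem_insert.1 h1 with h | h
      · exact h
      · exact absurd hkR (hΔ'k _ h)
    have hRlist : R = R' :=
      eq_of_sorted_toFinset (rootList_sorted _ _) (rootList_sorted _ _) hRR'
    have hcr : childRoots (t :: ts) (k + 1) = childRoots (t' :: ts') (k + 1) := by
      injection hRlist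
    have hΔΔ' : Δ = Δ' := by
      have key : ∀ (X : Finset (Finset ℕ)) (Rf : Finset ℕ), k ∈ Rf → (∀ B ∈ X, k ∉ B) →
          X = (insert Rf X).filter (fun B => k ∉ B) := by
        intro X Rf hk hX
        ext B
        simp only [Finset.mem_filter, Finset.mem_insert]
        constructor
        · intro hB; exact ⟨Or.inr hB, hX B hB⟩
        · rintro ⟨h | hB, hkB⟩
          · subst h; exact absurd hk hkB
          · exact hB
      rw [key Δ R.toFinset hkR hΔk, key Δ' R'.toFinset (hRR' ▸ hkR) hΔ'k, hb]
    have hsz : sizeList (t :: ts) = sizeList (t' :: ts') := by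
      rw [size_node, size_node] at hs; omega
    have := blkList_inj (t :: ts) (t' :: ts') (k + 1) hcr hsz hΔΔ'
    rw [this]
theorem blkList_inj : ∀ (ts ts' : List PTree) (k : ℕ),
    childRoots ts k = childRoots ts' k → sizeList ts = sizeList ts' →
    nBlocks (blkList ts k) = nBlocks (blkList ts' k) → ts = ts'
  | [], [], _, _, _, _ => rfl
  | [], t' :: ts', k, hcr, _, _ => by rw [childRoots, childRoots] at hcr; exact absurd hcr (by simp)
  | t :: ts, [], k, hcr, _, _ => by rw [childRoots, childRoots] at hcr; exact absurd hcr (by simp)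
  | t :: ts, t' :: ts', k, hcr, hsz, hb => by
    rw [childRoots, childRoots] at hcr
    have hX : childRoots ts (k + t.size) = childRoots ts' (k + t'.size) := by
      injection hcr
    have hts : t.size = t'.size := by
      cases ts with
      | nil =>
        cases ts' with
        | nil => rw [sizeList_cons, sizeList_cons, sizeList_nil] at hsz; omega
        | cons u us =>
          exfalso
          rw [childRoots] at hX
          exact absurd hX.symm (by simp [childRoots])
      | cons v vs =>
        cases ts' with
        | nil =>
          exfalso
          rw [childRoots] at hX
          exact absurd hX (by simp [childRoots])
        | cons u us =>
          rw [childRoots, childRoots] at hX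
          have : k + t.size = k + t'.size := by injection hX
          omega
    rw [blkList_cons, blkList_cons, nBlocks_append, nBlocks_append] at hb
    set Δ1 := nBlocks (t.blk k) with h1
    set Δ2 := nBlocks (blkList ts (k + t.size)) with h2
    set Δ1' := nBlocks (t'.blk k) with h3
    set Δ2' := nBlocks (blkList ts' (k + t'.size)) with h4
    have bound1 : ∀ B ∈ Δ1, ∀ x ∈ B, x < k + t.size := fun B hB x hx =>
      ((tgood t k).sub B hB x hx).2
    have bound1' : ∀ B ∈ Δ1', ∀ x ∈ B, x < k + t.size := fun B hB x hx => by
      have := ((tgood t' k).sub B hB x hx).2; omega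
    have bound2 : ∀ B ∈ Δ2, ∀ x ∈ B, k + t.size ≤ x := fun B hB x hx =>
      ((fgood ts (k + t.size)).sub B hB x hx).1
    have bound2' : ∀ B ∈ Δ2', ∀ x ∈ B, k + t.size ≤ x := fun B hB x hx => by
      have := ((fgood ts' (k + t'.size)).sub B hB x hx).1; omega
    have ne1 : ∀ B ∈ Δ1, B.Nonempty := fun B hB =>
      Finset.card_pos.1 (by have := (tgood t k).two B hB; omega)
    have ne1' : ∀ B ∈ Δ1', B.Nonempty := fun B hB =>
      Finset.card_pos.1 (by have := (tgood t' k).two B hB; omega)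
    have ne2 : ∀ B ∈ Δ2, B.Nonempty := fun B hB =>
      Finset.card_pos.1 (by have := (fgood ts (k + t.size)).two B hB; omega)
    have ne2' : ∀ B ∈ Δ2', B.Nonempty := fun B hB =>
      Finset.card_pos.1 (by have := (fgood ts' (k + t'.size)).two B hB; omega)
    have e1 : Δ1 = Δ1' := by
      ext B
      constructor
      · intro hB
        have : B ∈ Δ1' ∪ Δ2' := by rw [← hb]; exact Finset.mem_union_left _ hB
        rcases Finset.mem_union.1 this with h | h
        · exact h
        · obtain ⟨x, hx⟩ := ne1 B hB
          exact absurd (bound2' B h x hx) (by have := bound1 B hB x hx; omega)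
      · intro hB
        have : B ∈ Δ1 ∪ Δ2 := by rw [hb]; exact Finset.mem_union_left _ hB
        rcases Finset.mem_union.1 this with h | h
        · exact h
        · obtain ⟨x, hx⟩ := ne1' B hB
          exact absurd (bound2 B h x hx) (by have := bound1' B hB x hx; omega)
    have e2 : Δ2 = Δ2' := by
      ext B
      constructor
      · intro hB
        have : B ∈ Δ1' ∪ Δ2' := by rw [← hb]; exact Finset.mem_union_right _ hB
        rcases Finset.mem_union.1 this with h | h
        · obtain ⟨x, hx⟩ := ne2 B hB
          exact absurd (bound2 B hB x hx) (by have := bound1' B h x hx; omega)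
        · exact h
      · intro hB
        have : B ∈ Δ1 ∪ Δ2 := by rw [hb]; exact Finset.mem_union_right _ hB
        rcases Finset.mem_union.1 this with h | h
        · obtain ⟨x, hx⟩ := ne2' B hB
          exact absurd (bound2' B hB x hx) (by have := bound1 B h x hx; omega)
        · exact h
    have et : t = t' := blk_inj t t' k hts e1
    have ets : ts = ts' := by
      have hsub : k + t.size = k + t'.size := by omega
      have e2x : nBlocks (blkList ts (k + t.size)) = nBlocks (blkList ts' (k + t'.size)) := e2
      rw [hsub] at e2x hX
      apply blkList_inj ts ts' (k + t'.size) hX ?_ e2x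
      rw [sizeList_cons, sizeList_cons] at hsz; omega
    rw [et, ets]
end

end NCLAux

namespace NCLAux

variable {n : ℕ}

/-- ℕ-level image of a `Fin n`-partition. -/
def VΓ (π : Finset (Finset (Fin n))) : Finset (Finset ℕ) :=
  π.image (Finset.image Fin.val)

lemma V_inj : Function.Injective (VΓ (n := n)) :=
  Finset.image_injective (Finset.image_injective Fin.val_injective)

lemma image_val_inj : Function.Injective (Finset.image (Fin.val (n := n))) :=
  Finset.image_injective Fin.val_injective

lemma mem_V {π : Finset (Finset (Fin n))} {B' : Finset ℕ} :
    B' ∈ VΓ π ↔ ∃ B ∈ π, B.image Fin.val = B' := by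
  simp [VΓ]

lemma mem_image_val {B : Finset (Fin n)} {x : ℕ} :
    x ∈ B.image Fin.val ↔ ∃ h : x < n, (⟨x, h⟩ : Fin n) ∈ B := by
  simp only [Finset.mem_image]
  constructor
  · rintro ⟨y, hy, rfl⟩; exact ⟨y.isLt, by simpa using hy⟩
  · rintro ⟨h, hy⟩; exact ⟨⟨x, h⟩, hy, rfl⟩

lemma mem_listToBlock {l : List ℕ} {x : Fin n} :
    x ∈ listToBlock n l ↔ x.1 ∈ l := by
  simp only [listToBlock, List.mem_toFinset, List.mem_filterMap]
  constructor
  · rintro ⟨i, hi, hix⟩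
    by_cases h : i < n
    · simp only [dif_pos h, Option.some.injEq] at hix
      subst hix; exact hi
    · simp [dif_neg h] at hix
  · intro hx
    exact ⟨x.1, hx, by simp [x.isLt]⟩

lemma image_val_listToBlock {l : List ℕ} (h : ∀ x ∈ l, x < n) :
    (listToBlock n l).image Fin.val = l.toFinset := by
  ext x
  rw [mem_image_val, List.mem_toFinset]
  constructor
  · rintro ⟨hx, hmem⟩; exact mem_listToBlock.1 hmem
  · intro hx; exact ⟨h x hx, mem_listToBlock.2 hx⟩

lemma fin_min_eq_coe {B : Finset (Fin n)} {j : Fin n} (hj : j ∈ B) (h : ∀ x ∈ B, j ≤ x) :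
    B.min = (j : WithBot (Fin n)) :=
  le_antisymm (Finset.min_le hj) (Finset.le_min fun x hx => WithTop.coe_le_coe.2 (h x hx))

lemma min_image_val {B : Finset (Fin n)} {j : Fin n} :
    B.min = (j : WithBot (Fin n)) ↔ (B.image Fin.val).min = (j.1 : WithTop ℕ) := by
  constructor
  · intro h
    have hj : j ∈ B := Finset.mem_of_min h
    apply min_eq_coe (Finset.mem_image_of_mem _ hj)
    intro x hx
    obtain ⟨hxn, hxB⟩ := mem_image_val.1 hx
    have h2 := Finset.min_le hxB
    rw [h] at h2
    have h3 : j ≤ (⟨x, hxn⟩ : Fin n) := WithTop.coe_le_coe.1 h2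
    exact h3
  · intro h
    have hj' : j.1 ∈ B.image Fin.val := Finset.mem_of_min h
    obtain ⟨hjn, hjB⟩ := mem_image_val.1 hj'
    have hjeq : (⟨j.1, hjn⟩ : Fin n) = j := Fin.ext rfl
    rw [hjeq] at hjB
    apply fin_min_eq_coe hjB
    intro x hx
    have hx' : x.1 ∈ B.image Fin.val := Finset.mem_image_of_mem _ hx
    have h2 := Finset.min_le hx'
    rw [h] at h2
    have h3 : j.1 ≤ x.1 := WithTop.coe_le_coe.1 h2
    exact h3

lemma crosses_iff {B C : Finset (Fin n)} :
    Crosses B C ↔ NCross (B.image Fin.val) (C.image Fin.val) := by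
  constructor
  · rintro ⟨i, k, p, q, h1, h2, h3, h4, h5, h6, h7⟩
    exact ⟨i.1, k.1, p.1, q.1, h1, h2, h3,
      Finset.mem_image_of_mem _ h4, Finset.mem_image_of_mem _ h5,
      Finset.mem_image_of_mem _ h6, Finset.mem_image_of_mem _ h7⟩
  · rintro ⟨i, k, p, q, h1, h2, h3, h4, h5, h6, h7⟩
    obtain ⟨hi, hiB⟩ := mem_image_val.1 h4
    obtain ⟨hp, hpB⟩ := mem_image_val.1 h5
    obtain ⟨hk, hkC⟩ := mem_image_val.1 h6
    obtain ⟨hq, hqC⟩ := mem_image_val.1 h7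
    exact ⟨⟨i, hi⟩, ⟨k, hk⟩, ⟨p, hp⟩, ⟨q, hq⟩, h1, h2, h3, hiB, hpB, hkC, hqC⟩

lemma conn_up {π : Finset (Finset (Fin n))} {a b : Fin n} (h : Connected π a b) :
    NConnected (VΓ π) a.1 b.1 := by
  induction h with
  | refl => exact Relation.ReflTransGen.refl
  | tail _ hlink ih =>
    obtain ⟨B, hB, h1, h2⟩ := hlink
    exact ih.tail ⟨B.image Fin.val, mem_V.2 ⟨B, hB, rfl⟩,
      Finset.mem_image_of_mem _ h1, Finset.mem_image_of_mem _ h2⟩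

lemma conn_down {π : Finset (Finset (Fin n))} {u v : ℕ} (h : NConnected (VΓ π) u v) :
    ∀ (hu : u < n) (hv : v < n), Connected π ⟨u, hu⟩ ⟨v, hv⟩ := by
  induction h with
  | refl => intro hu hv; exact Relation.ReflTransGen.refl
  | tail _ hlink ih =>
    intro hu hv
    obtain ⟨B', hB', h1, h2⟩ := hlink
    obtain ⟨B, hB, rfl⟩ := mem_V.1 hB'
    obtain ⟨hbn, hbB⟩ := mem_image_val.1 h1
    obtain ⟨hvn, hvB⟩ := mem_image_val.1 h2
    exact (ih hu hbn).tail ⟨B, hB, hbB, hvB⟩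

lemma cPart_univ_iff (hn : 1 ≤ n) (π : Finset (Finset (Fin n))) :
    cPart n π = {(Finset.univ : Finset (Fin n))} ↔ ∀ i x : Fin n, Connected π i x := by
  constructor
  · intro h i x
    have : Finset.univ.filter (Connected π i) ∈ cPart n π :=
      Finset.mem_image.2 ⟨i, Finset.mem_univ i, rfl⟩
    rw [h, Finset.mem_singleton] at this
    have hx : x ∈ Finset.univ.filter (Connected π i) := by rw [this]; exact Finset.mem_univ x
    exact (Finset.mem_filter.1 hx).2
  · intro h
    have : ∀ i : Fin n, Finset.univ.filter (Connected π i) = Finset.univ := by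
      intro i
      ext x
      simp [h i x]
    rw [cPart]
    have hne : (Finset.univ : Finset (Fin n)).Nonempty := ⟨⟨0, hn⟩, Finset.mem_univ _⟩
    rw [show (Finset.univ.image fun i => Finset.univ.filter (Connected π i))
        = Finset.univ.image fun _ : Fin n => (Finset.univ : Finset (Fin n)) by
      apply Finset.image_congr; intro i _; exact this i]
    rw [Finset.image_const hne]

/-- The bridge between `Fin`-level and `ℕ`-level partitions. -/
theorem bridge (hn : 1 ≤ n) (π : Finset (Finset (Fin n))) :
    (IsNCL n π ∧ cPart n π = {(Finset.univ : Finset (Fin n))}) ↔ Good 0 n (VΓ π) := by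
  constructor
  · rintro ⟨⟨hne, hcov, hnc, hint⟩, hconn⟩
    rw [cPart_univ_iff hn] at hconn
    constructor
    · intro B' hB'
      obtain ⟨B, hB, rfl⟩ := mem_V.1 hB'
      obtain ⟨x, hx⟩ := hne B hB
      exact ⟨x.1, Finset.mem_image_of_mem _ hx⟩
    · intro B' hB' x hx
      obtain ⟨B, hB, rfl⟩ := mem_V.1 hB'
      obtain ⟨hxn, _⟩ := mem_image_val.1 hx
      omega
    · intro x _ hx
      obtain ⟨B, hB, hxB⟩ := hcov ⟨x, by omega⟩
      exact ⟨B.image Fin.val, mem_V.2 ⟨B, hB, rfl⟩, Finset.mem_image_of_mem _ hxB⟩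
    · intro B' hB' C' hC' hBC
      obtain ⟨B, hB, rfl⟩ := mem_V.1 hB'
      obtain ⟨C, hC, rfl⟩ := mem_V.1 hC'
      have : B ≠ C := fun h => hBC (by rw [h])
      intro hcr
      exact hnc B hB C hC this (crosses_iff.2 hcr)
    · intro B' hB' C' hC' hBC
      obtain ⟨B, hB, rfl⟩ := mem_V.1 hB'
      obtain ⟨C, hC, rfl⟩ := mem_V.1 hC'
      have hBC' : B ≠ C := fun h => hBC (by rw [h])
      have := (hint B hB C hC hBC').1
      rw [← Finset.image_inter _ _ Fin.val_injective]
      rw [Finset.card_image_of_injective _ Fin.val_injective]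
      exact this
    · intro B' hB' C' hC' hBC j hj
      obtain ⟨B, hB, rfl⟩ := mem_V.1 hB'
      obtain ⟨C, hC, rfl⟩ := mem_V.1 hC'
      have hBC' : B ≠ C := fun h => hBC (by rw [h])
      have hj' : j ∈ B.image Fin.val ∩ C.image Fin.val := by
        rw [hj]; exact Finset.mem_singleton_self j
      obtain ⟨hjn, hjB⟩ := mem_image_val.1 (Finset.mem_inter.1 hj').1
      have hInt : B ∩ C = {(⟨j, hjn⟩ : Fin n)} := by
        apply image_val_inj
        rw [Finset.image_inter _ _ Fin.val_injective, hj, Finset.image_singleton]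
      obtain ⟨h2B, h2C, hxor⟩ := (hint B hB C hC hBC').2 ⟨j, hjn⟩ hInt
      refine ⟨?_, ?_, ?_⟩
      · rw [Finset.card_image_of_injective _ Fin.val_injective]; exact h2B
      · rw [Finset.card_image_of_injective _ Fin.val_injective]; exact h2C
      · rcases hxor with ⟨h1, h2⟩ | ⟨h1, h2⟩
        · exact Or.inl ⟨min_image_val.1 h1, fun hc => h2 (min_image_val.2 hc)⟩
        · exact Or.inr ⟨min_image_val.1 h1, fun hc => h2 (min_image_val.2 hc)⟩
    · intro x y _ hx _ hy
      exact conn_up (hconn ⟨x, by omega⟩ ⟨y, by omega⟩)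
  · intro G
    refine ⟨⟨?_, ?_, ?_, ?_⟩, ?_⟩
    · intro B hB
      obtain ⟨x', hx'⟩ := G.nonempty (B.image Fin.val) (mem_V.2 ⟨B, hB, rfl⟩)
      obtain ⟨hxn, hxB⟩ := mem_image_val.1 hx'
      exact ⟨_, hxB⟩
    · intro x
      obtain ⟨B', hB', hxB'⟩ := G.cover x.1 (by omega) (by have := x.isLt; omega)
      obtain ⟨B, hB, rfl⟩ := mem_V.1 hB'
      obtain ⟨hxn, hxB⟩ := mem_image_val.1 hxB'
      exact ⟨B, hB, by simpa using hxB⟩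
    · intro B hB C hC hBC hcr
      exact G.nocross _ (mem_V.2 ⟨B, hB, rfl⟩) _ (mem_V.2 ⟨C, hC, rfl⟩)
        (fun h => hBC (image_val_inj h)) (crosses_iff.1 hcr)
    · intro B hB C hC hBC
      have hBC' : B.image Fin.val ≠ C.image Fin.val := fun h => hBC (image_val_inj h)
      constructor
      · have := G.card_inter _ (mem_V.2 ⟨B, hB, rfl⟩) _ (mem_V.2 ⟨C, hC, rfl⟩) hBC'
        rw [← Finset.image_inter _ _ Fin.val_injective,
          Finset.card_image_of_injective _ Fin.val_injective] at this
        exact this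
      · intro j hj
        have hj' : B.image Fin.val ∩ C.image Fin.val = {j.1} := by
          rw [← Finset.image_inter _ _ Fin.val_injective, hj]
          simp
        obtain ⟨h2B, h2C, hxor⟩ := G.inter _ (mem_V.2 ⟨B, hB, rfl⟩) _
          (mem_V.2 ⟨C, hC, rfl⟩) hBC' j.1 hj'
        refine ⟨?_, ?_, ?_⟩
        · rwa [Finset.card_image_of_injective _ Fin.val_injective] at h2B
        · rwa [Finset.card_image_of_injective _ Fin.val_injective] at h2C
        · rcases hxor with ⟨h1, h2⟩ | ⟨h1, h2⟩
          · exact Or.inl ⟨min_image_val.2 h1, fun hc => h2 (min_image_val.1 hc)⟩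
          · exact Or.inr ⟨min_image_val.2 h1, fun hc => h2 (min_image_val.1 hc)⟩
    · rw [cPart_univ_iff hn]
      intro i x
      exact conn_down (G.conn i.1 x.1 (by omega) (by have := i.isLt; omega) (by omega)
        (by have := x.isLt; omega)) i.isLt x.isLt

end NCLAux

namespace NCLAux

lemma fold_mem {G : ℕ → Finset (Finset ℕ)} {rs : List ℕ} {C : Finset ℕ} :
    C ∈ rs.foldr (fun r acc => G r ∪ acc) ∅ ↔ ∃ r ∈ rs, C ∈ G r := by
  induction rs with
  | nil => simp
  | cons r rs ih => simp [ih]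

lemma treeBlocksAt_eq_blk {T : PTree} (h : 2 ≤ T.size) (a : ℕ) :
    treeBlocksAt T a = T.blk a := by
  cases T with
  | node ts => cases ts with
    | nil => rw [size_node, sizeList_nil] at h; omega
    | cons t ts => rfl

lemma size_one_node_nil {T : PTree} (h : T.size = 1) : T = .node [] := by
  cases T with
  | node ts =>
    cases ts with
    | nil => rfl
    | cons t ts =>
      rw [size_node, sizeList_cons] at h
      have := size_pos t
      omega

lemma chain'_of_sorted {l : List ℕ} (hs : l.Pairwise (· < ·)) {R : ℕ → ℕ → Prop}
    (hR : ∀ x y, x ∈ l → y ∈ l → x < y → (∀ z ∈ l, ¬(x < z ∧ z < y)) → R x y) :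
    l.Chain' R := by
  induction l with
  | nil => exact List.isChain_nil
  | cons x l ih =>
    rcases List.pairwise_cons.1 hs with ⟨hx, hl⟩
    refine List.isChain_cons.2 ⟨?_, ?_⟩
    · intro y hy
      cases l with
      | nil => simp at hy
      | cons y0 l' =>
        have hy0 : y = y0 := by simp at hy; omega
        subst hy0
        apply hR x y (List.mem_cons_self)
          (List.mem_cons_of_mem _ (List.mem_cons_self)) (hx y (List.mem_cons_self))
        rintro z hz ⟨h1, h2⟩
        rcases List.mem_cons.1 hz with rfl | hz
        · omega
        · rcases List.mem_cons.1 hz with rfl | hz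
          · omega
          · have := (List.pairwise_cons.1 hl).1 z hz
            omega
    · apply ih hl
      intro x' y' hx' hy' hlt hno
      apply hR x' y' (List.mem_cons_of_mem _ hx') (List.mem_cons_of_mem _ hy') hlt
      intro z hz hbet
      rcases List.mem_cons.1 hz with rfl | hz
      · exact absurd hbet.1 (by have := hx x' hx'; omega)
      · exact hno z hz hbet

lemma assemble (f : ℕ → ℕ) (G : ℕ → Finset (Finset ℕ)) :
    ∀ (rs : List ℕ) (e : ℕ),
      (rs ++ [e]).Chain' (fun x y => f x = y) →
      (∀ r ∈ rs, ∃ t : PTree, t.size = f r - r ∧ r < f r ∧ nBlocks (t.blk r) = G r) →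
      ∃ ts : List PTree, rs.headD e ≤ e ∧ sizeList ts = e - rs.headD e ∧
        childRoots ts (rs.headD e) = rs ∧
        nBlocks (blkList ts (rs.headD e)) = rs.foldr (fun r acc => G r ∪ acc) ∅ := by
  intro rs
  induction rs with
  | nil =>
    intro e _ _
    exact ⟨[], le_rfl, by simp, by simp [childRoots], by simp⟩
  | cons r rs ih =>
    intro e hch hex
    obtain ⟨t, hts, hlt, htb⟩ := hex r (List.mem_cons_self)
    have hch2 : (rs ++ [e]).Chain' (fun x y => f x = y) :=
      (List.isChain_cons.1 hch).2
    have hhead : f r = rs.headD e := by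
      have h1 := (List.isChain_cons.1 hch).1
      cases rs with
      | nil => exact h1 e (by simp)
      | cons r2 rs2 => exact h1 r2 (by simp)
    obtain ⟨ts, hle, hsz, hcr, hnb⟩ := ih e hch2 (fun r' hr' => hex r' (List.mem_cons_of_mem _ hr'))
    refine ⟨t :: ts, ?_, ?_, ?_, ?_⟩
    · simp only [List.headD_cons]
      omega
    · rw [sizeList_cons, hts]
      simp only [List.headD_cons]
      omega
    · rw [childRoots]
      simp only [List.headD_cons]
      congr 1
      rw [show r + t.size = rs.headD e by omega] at *
      exact hcr
    · rw [blkList_cons, nBlocks_append]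
      simp only [List.headD_cons, List.foldr_cons]
      rw [htb]
      congr 1
      rw [show r + t.size = rs.headD e by omega] at *
      exact hnb

end NCLAux

namespace NCLAux

theorem nsurj : ∀ N a (Γ : Finset (Finset ℕ)), 1 ≤ N → Good a N Γ →
    ∃ T : PTree, T.size = N ∧ nBlocks (treeBlocksAt T a) = Γ := by
  intro N
  induction N using Nat.strong_induction_on with
  | _ N ih =>
  intro a Γ hN G
  by_cases hN1 : N = 1
  · subst hN1
    have hΓ : Γ = {({a} : Finset ℕ)} := by
      have hsingle : ∀ B ∈ Γ, B = {a} := by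
        intro B hB
        obtain ⟨x, hx⟩ := G.nonempty B hB
        apply Finset.eq_singleton_iff_unique_mem.2
        have hxa : x = a := by have := G.sub B hB x hx; omega
        subst hxa
        exact ⟨hx, fun y hy => by have := G.sub B hB y hy; omega⟩
      obtain ⟨B, hB, haB⟩ := G.cover a le_rfl (by omega)
      ext C
      rw [Finset.mem_singleton]
      constructor
      · exact hsingle C
      · intro hC; subst hC; rw [← hsingle B hB]; exact hB
    refine ⟨.node [], by rw [size_node]; simp, ?_⟩
    rw [treeBlocksAt_nil, hΓ]
    simp [nBlocks]
  · have hN2 : 2 ≤ N := by omega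
    -- the block containing `a`
    have amin : ∀ B ∈ Γ, a ∈ B → B.min = (a : WithTop ℕ) := by
      intro B hB haB
      exact min_eq_coe haB fun x hx => (G.sub B hB x hx).1
    obtain ⟨B0, hB0, haB0⟩ := G.cover a le_rfl (by omega)
    have huniq : ∀ C ∈ Γ, a ∈ C → C = B0 := by
      intro C hC haC
      by_contra hne
      have hcap : C ∩ B0 = {a} := by
        apply Finset.eq_singleton_iff_unique_mem.2
        refine ⟨Finset.mem_inter.2 ⟨haC, haB0⟩, ?_⟩
        intro y hy
        exact Finset.card_le_one.1 (G.card_inter C hC B0 hB0 hne) y hy a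
          (Finset.mem_inter.2 ⟨haC, haB0⟩)
      obtain ⟨_, _, hxor⟩ := G.inter C hC B0 hB0 hne a hcap
      rcases hxor with ⟨h1, h2⟩ | ⟨h1, h2⟩
      · exact h2 (amin B0 hB0 haB0)
      · exact h2 (amin C hC haC)
    -- invariance of block-respecting predicates along chains
    have respect : ∀ (P : ℕ → Prop), (∀ B ∈ Γ, ∀ x ∈ B, P x → ∀ y ∈ B, P y) →
        ∀ u v, NConnected Γ u v → P u → P v := by
      intro P hP u v h hu
      induction h with
      | refl => exact hu
      | tail hc hl ihv =>
        obtain ⟨B, hB, h1, h2⟩ := hl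
        exact hP B hB _ h1 ihv _ h2
    -- B0 has at least 2 elements
    have hB0two : 2 ≤ B0.card := by
      by_contra hcard
      have hB0a : B0 = {a} := by
        apply Finset.eq_singleton_iff_unique_mem.2
        exact ⟨haB0, fun y hy => Finset.card_le_one.1 (by omega) y hy a haB0⟩
      refine absurd (respect (fun x => x ≠ a) ?_ (a + 1) a
        (G.conn (a + 1) a (by omega) (by omega) le_rfl (by omega)) (by omega)) (by simp)
      intro B hB x hx hxa y hy
      intro hya
      subst hya
      have : B = B0 := huniq B hB hy
      subst this
      rw [hB0a, Finset.mem_singleton] at hx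
      exact hxa hx
    -- the second-smallest element of B0
    have herane : (B0.erase a).Nonempty := by
      rw [← Finset.card_pos, Finset.card_erase_of_mem haB0]
      omega
    set b1 := (B0.erase a).min' herane with hb1def
    have hb1mem : b1 ∈ B0 := Finset.mem_of_mem_erase ((B0.erase a).min'_mem herane)
    have hb1ne : b1 ≠ a := Finset.ne_of_mem_erase ((B0.erase a).min'_mem herane)
    have hb1gt : a < b1 := by
      have := (G.sub B0 hB0 b1 hb1mem).1
      omega
    have hb1le : ∀ z ∈ B0, z ≠ a → b1 ≤ z := fun z hz hza =>
      (B0.erase a).min'_le z (Finset.mem_erase.2 ⟨hza, hz⟩)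
    -- basic location facts
    have hb1min : ∀ C ∈ Γ, C ≠ B0 → ∀ j, j ∈ C → j ∈ B0 → ∀ x ∈ C, j ≤ x := by
      intro C hC hne j hjC hjB0
      have hja : j ≠ a := fun h => hne (huniq C hC (h ▸ hjC))
      have hcap : C ∩ B0 = {j} := by
        apply Finset.eq_singleton_iff_unique_mem.2
        refine ⟨Finset.mem_inter.2 ⟨hjC, hjB0⟩, ?_⟩
        intro y hy
        exact Finset.card_le_one.1 (G.card_inter C hC B0 hB0 hne) y hy j
          (Finset.mem_inter.2 ⟨hjC, hjB0⟩)
      obtain ⟨_, _, hxor⟩ := G.inter C hC B0 hB0 hne j hcap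
      have hCmin : C.min = (j : WithTop ℕ) := by
        rcases hxor with ⟨h1, _⟩ | ⟨hb0j, _⟩
        · exact h1
        · exfalso
          apply hja
          have h3 := amin B0 hB0 haB0
          have h4 : (j : WithTop ℕ) = (a : WithTop ℕ) := by rw [← hb0j, h3]
          exact_mod_cast h4
      exact fun x hx => coe_le_min hCmin hx
    have nostraddle : ∀ C ∈ Γ, C ≠ B0 → ∀ l ∈ C, ∀ s ∈ C, ∀ p ∈ B0,
        a < l → l < p → p < s → False := by
      intro C hC hne l hl s hs p hp h1 h2 h3
      exact G.nocross B0 hB0 C hC (fun h => hne h.symm) ⟨a, l, p, s, h1, h2, h3, haB0, hp, hl, hs⟩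
    -- b1 = a + 1
    have hb1eq : b1 = a + 1 := by
      by_contra hne
      have hb1gt1 : a + 1 < b1 := by omega
      have : a < a ∧ a < b1 := by
        refine respect (fun x => a < x ∧ x < b1) ?_ (a + 1) a
          (G.conn (a + 1) a (by omega) (by omega) le_rfl (by omega)) (by omega)
        intro B hB x hx hPx y hy
        have hBne : B ≠ B0 := by
          intro h
          subst h
          rcases Nat.eq_or_lt_of_le ((G.sub B hB x hx).1) with h | h
          · omega
          · have := hb1le x hx (by omega)
            omega
        have hya : a < y := by
          have := (G.sub B hB y hy).1
          rcases Nat.eq_or_lt_of_le this with h | h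
          · exact absurd (huniq B hB (h ▸ hy)) hBne
          · omega
        refine ⟨hya, ?_⟩
        by_contra hyb
        push_neg at hyb
        rcases Nat.eq_or_lt_of_le hyb with h | h
        · exact absurd (hb1min B hB hBne y hy (h ▸ hb1mem) x hx) (by omega)
        · exact nostraddle B hB hBne x hx y hy b1 hb1mem hPx.1 hPx.2 h
      omega
    -- the "next cut point" function
    classical
    set nxt : ℕ → ℕ := fun r =>
      if h : (B0.filter (r < ·)).Nonempty then (B0.filter (r < ·)).min' h else a + N
      with hnxtdef
    have hnxt2 : ∀ r z, z ∈ B0 → r < z → nxt r ≤ z := by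
      intro r z hz hrz
      have hne : (B0.filter (r < ·)).Nonempty := ⟨z, Finset.mem_filter.2 ⟨hz, hrz⟩⟩
      rw [hnxtdef]
      simp only [dif_pos hne]
      exact Finset.min'_le _ z (Finset.mem_filter.2 ⟨hz, hrz⟩)
    have hnxt5 : ∀ r, nxt r = a + N ∨ (nxt r ∈ B0 ∧ r < nxt r) := by
      intro r
      rw [hnxtdef]
      by_cases h : (B0.filter (r < ·)).Nonempty
      · right
        simp only [dif_pos h]
        have := Finset.mem_filter.1 ((B0.filter (r < ·)).min'_mem h)
        exact ⟨this.1, this.2⟩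
      · left; simp only [dif_neg h]
    have hnxt1 : ∀ r ∈ B0, r < nxt r := by
      intro r hr
      rcases hnxt5 r with h | h
      · have := (G.sub B0 hB0 r hr).2; omega
      · exact h.2
    have hnxt4 : ∀ r ∈ B0, nxt r ≤ a + N := by
      intro r hr
      rcases hnxt5 r with h | ⟨h1, _⟩
      · omega
      · have := (G.sub B0 hB0 _ h1).2; omega
    have hB0cap : ∀ r, ∀ z ∈ B0, r ≤ z → z < nxt r → z = r := by
      intro r z hz h1 h2
      rcases Nat.eq_or_lt_of_le h1 with h | h
      · omega
      · exact absurd (hnxt2 r z hz h) (by omega)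
    -- location of blocks other than B0
    have hloc : ∀ C ∈ Γ, C ≠ B0 → ∃ r ∈ B0, r ≠ a ∧ ∀ x ∈ C, r ≤ x ∧ x < nxt r := by
      intro C hC hne
      have hCne := G.nonempty C hC
      set c := C.min' hCne with hcdef
      have hcC : c ∈ C := C.min'_mem hCne
      have hcle : ∀ x ∈ C, c ≤ x := fun x hx => C.min'_le x hx
      have hca : c ≠ a := fun h => hne (huniq C hC (h ▸ hcC))
      have hcgt : a < c := by
        have := (G.sub C hC c hcC).1; omega
      by_cases hcB0 : c ∈ B0
      · refine ⟨c, hcB0, hca, ?_⟩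
        intro x hx
        refine ⟨hcle x hx, ?_⟩
        by_contra hge
        push_neg at hge
        rcases hnxt5 c with h | ⟨hpB0, hpgt⟩
        · have := (G.sub C hC x hx).2; omega
        · set p := nxt c
          rcases Nat.eq_or_lt_of_le hge with h | h
          · -- x = p ∈ C ∩ B0 and c ∈ C ∩ B0, contradiction with card ≤ 1
            have hxB0 : x ∈ B0 := by rw [← h]; exact hpB0
            have h1 : c ∈ C ∩ B0 := Finset.mem_inter.2 ⟨hcC, hcB0⟩
            have h2 : x ∈ C ∩ B0 := Finset.mem_inter.2 ⟨hx, hxB0⟩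
            have := Finset.card_le_one.1 (G.card_inter C hC B0 hB0 hne) c h1 x h2
            omega
          · exact nostraddle C hC hne c hcC x hx p hpB0 hcgt hpgt h
      · have hFne : (B0.filter (· < c)).Nonempty := ⟨a, Finset.mem_filter.2 ⟨haB0, hcgt⟩⟩
        set r := (B0.filter (· < c)).max' hFne with hrdef
        have hrmem := Finset.mem_filter.1 (Finset.max'_mem (B0.filter (· < c)) hFne)
        have hrB0 : r ∈ B0 := hrmem.1
        have hrc : r < c := hrmem.2
        have hrmax : ∀ z ∈ B0, z < c → z ≤ r := fun z hz hzc =>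
          (B0.filter (· < c)).le_max' z (Finset.mem_filter.2 ⟨hz, hzc⟩)
        have hrne : r ≠ a := by
          have hbc : b1 < c := by
            rcases Nat.lt_or_ge b1 c with h | h
            · exact h
            · rcases Nat.eq_or_lt_of_le h with h' | h'
              · exact absurd (h' ▸ hb1mem) hcB0
              · omega
          have := hrmax b1 hb1mem hbc
          omega
        refine ⟨r, hrB0, hrne, ?_⟩
        intro x hx
        refine ⟨le_trans (le_of_lt hrc) (hcle x hx), ?_⟩
        by_contra hge
        push_neg at hge
        rcases hnxt5 r with h | ⟨hpB0, hpgt⟩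
        · have := (G.sub C hC x hx).2; omega
        · set p := nxt r
          have hcp : c < p := by
            rcases Nat.lt_or_ge c p with h | h
            · exact h
            · rcases Nat.eq_or_lt_of_le h with h' | h'
              · exact absurd (h' ▸ hpB0) hcB0
              · exact absurd (hrmax p hpB0 h') (by omega)
          rcases Nat.eq_or_lt_of_le hge with h | h
          · have hxB0 : x ∈ B0 := by rw [← h]; exact hpB0
            exact absurd (hb1min C hC hne x hx hxB0 c hcC) (by omega)
          · exact nostraddle C hC hne c hcC x hx p hpB0 hcgt hcp h
    -- the blocks attached to a cut point r
    set Gb : ℕ → Finset (Finset ℕ) :=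
      fun r => Γ.filter (fun C => C ≠ B0 ∧ ∀ x ∈ C, r ≤ x ∧ x < nxt r) with hGbdef
    have hGbmem : ∀ r C, C ∈ Gb r ↔ C ∈ Γ ∧ C ≠ B0 ∧ ∀ x ∈ C, r ≤ x ∧ x < nxt r := by
      intro r C
      simp only [hGbdef, Finset.mem_filter]
    have hin : ∀ C ∈ Γ, C ≠ B0 → ∀ x ∈ C, ∀ r ∈ B0, r ≠ a → r ≤ x → x < nxt r →
        C ∈ Gb r := by
      intro C hC hne x hx r hr hra h1 h2
      obtain ⟨r', hr', hr'a, hbounds⟩ := hloc C hC hne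
      have : r' = r := by
        have hxb := hbounds x hx
        rcases Nat.lt_trichotomy r r' with h | h | h
        · exact absurd (hnxt2 r r' hr' h) (by omega)
        · omega
        · exact absurd (hnxt2 r' r hr h) (by omega)
      rw [this] at hbounds
      exact (hGbmem r C).2 ⟨hC, hne, hbounds⟩
    -- per-root subtree construction
    have hsubt : ∀ r ∈ B0, r ≠ a → ∃ t : PTree, t.size = nxt r - r ∧ nBlocks (t.blk r) = Gb r := by
      intro r hr hra
      have hra' : a < r := by
        have := (G.sub B0 hB0 r hr).1
        omega
      have hnr1 : r < nxt r := hnxt1 r hr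
      have hnrN : nxt r ≤ a + N := hnxt4 r hr
      by_cases hone : nxt r = r + 1
      · have hempty : Gb r = ∅ := by
          rw [Finset.eq_empty_iff_forall_notMem]
          intro C hCG
          obtain ⟨hC, hCne, hbounds⟩ := (hGbmem r C).1 hCG
          obtain ⟨x, hx⟩ := G.nonempty C hC
          have hCr : r ∈ C := by
            have := hbounds x hx
            have hxr : x = r := by omega
            exact hxr ▸ hx
          have hCsing : C = {r} := Finset.eq_singleton_iff_unique_mem.2
            ⟨hCr, fun y hy => by have := hbounds y hy; omega⟩
          have hcap : C ∩ B0 = {r} := by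
            apply Finset.eq_singleton_iff_unique_mem.2
            refine ⟨Finset.mem_inter.2 ⟨hCr, hr⟩, fun y hy => ?_⟩
            have hy' := Finset.mem_inter.1 hy
            have := hbounds y hy'.1
            omega
          obtain ⟨h2C, _, _⟩ := G.inter C hC B0 hB0 hCne r hcap
          rw [hCsing] at h2C
          simp at h2C
        refine ⟨.node [], ?_, ?_⟩
        · rw [size_node]; simp; omega
        · have hb : PTree.blk (.node []) r = [] := by rw [blk_node]; simp
          rw [hb, hempty]
          rfl
      · have hnr2 : 2 ≤ nxt r - r := by omega
        have hcovr : ∃ D ∈ Gb r, r ∈ D := by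
          by_contra hno
          push_neg at hno
          have hstep : ∀ B ∈ Γ, ∀ x ∈ B, (r < x ∧ x < nxt r) → ∀ y ∈ B, (r < y ∧ y < nxt r) := by
            intro B hB x hx hPx y hy
            have hBne : B ≠ B0 := by
              intro h
              subst h
              have := hB0cap r x hx (le_of_lt hPx.1) hPx.2
              omega
            have hBG : B ∈ Gb r := hin B hB hBne x hx r hr hra (le_of_lt hPx.1) hPx.2
            have hb := ((hGbmem r B).1 hBG).2.2 y hy
            rcases Nat.eq_or_lt_of_le hb.1 with h | h
            · exact absurd (h ▸ hy) (hno B hBG)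
            · exact ⟨h, hb.2⟩
          have := respect (fun x => r < x ∧ x < nxt r) hstep (r + 1) a
            (G.conn (r + 1) a (by omega) (by omega) le_rfl (by omega)) (by omega)
          omega
        obtain ⟨D0, hD0, hrD0⟩ := hcovr
        have key : ∀ u v, NConnected Γ u v → (r ≤ u ∧ u < nxt r) →
            ((r ≤ v ∧ v < nxt r → NConnected (Gb r) u v) ∧
              (¬(r ≤ v ∧ v < nxt r) → NConnected (Gb r) u r)) := by
          intro u v h hu
          induction h with
          | refl => exact ⟨fun _ => Relation.ReflTransGen.refl, fun hv => absurd hu hv⟩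
          | @tail w v' hc hl ihv =>
            obtain ⟨D, hD, hwD, hvD⟩ := hl
            constructor
            · intro hv'U
              by_cases hwU : r ≤ w ∧ w < nxt r
              · by_cases hDB0 : D = B0
                · subst hDB0
                  have hw : w = r := hB0cap r w hwD hwU.1 hwU.2
                  have hv' : v' = r := hB0cap r v' hvD hv'U.1 hv'U.2
                  have h1 := ihv.1 hwU
                  rw [show v' = w by omega]
                  exact h1
                · have hDG : D ∈ Gb r := hin D hD hDB0 w hwD r hr hra hwU.1 hwU.2
                  exact (ihv.1 hwU).tail ⟨D, hDG, hwD, hvD⟩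
              · by_cases hDB0 : D = B0
                · subst hDB0
                  have hv' : v' = r := hB0cap r v' hvD hv'U.1 hv'U.2
                  rw [hv']
                  exact ihv.2 hwU
                · have hDG : D ∈ Gb r := hin D hD hDB0 v' hvD r hr hra hv'U.1 hv'U.2
                  have := ((hGbmem r D).1 hDG).2.2 w hwD
                  exact absurd this hwU
            · intro hv'n
              by_cases hwU : r ≤ w ∧ w < nxt r
              · by_cases hDB0 : D = B0
                · subst hDB0
                  have hw : w = r := hB0cap r w hwD hwU.1 hwU.2
                  have h1 := ihv.1 hwU
                  rw [hw] at h1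
                  exact h1
                · have hDG : D ∈ Gb r := hin D hD hDB0 w hwD r hr hra hwU.1 hwU.2
                  have := ((hGbmem r D).1 hDG).2.2 v' hvD
                  exact absurd this hv'n
              · exact ihv.2 hwU
        have Ggood : Good r (nxt r - r) (Gb r) := by
          constructor
          · intro B hB
            exact G.nonempty B ((hGbmem r B).1 hB).1
          · intro B hB x hx
            have := ((hGbmem r B).1 hB).2.2 x hx
            omega
          · intro m hm1 hm2
            rcases Nat.eq_or_lt_of_le hm1 with heq | hlt
            · exact ⟨D0, hD0, heq ▸ hrD0⟩
            · obtain ⟨B, hB, hmB⟩ := G.cover m (by omega) (by omega)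
              have hBne : B ≠ B0 := by
                intro h
                subst h
                have := hB0cap r m hmB (by omega) (by omega)
                omega
              exact ⟨B, hin B hB hBne m hmB r hr hra (by omega) (by omega), hmB⟩
          · intro B hB C hC hBC
            exact G.nocross B ((hGbmem r B).1 hB).1 C ((hGbmem r C).1 hC).1 hBC
          · intro B hB C hC hBC
            exact G.card_inter B ((hGbmem r B).1 hB).1 C ((hGbmem r C).1 hC).1 hBC
          · intro B hB C hC hBC
            exact G.inter B ((hGbmem r B).1 hB).1 C ((hGbmem r C).1 hC).1 hBC
          · intro x y hx1 hx2 hy1 hy2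
            exact (key x y (G.conn x y (by omega) (by omega) (by omega) (by omega))
              ⟨hx1, by omega⟩).1 ⟨hy1, by omega⟩
        obtain ⟨t, htsz, htb⟩ := ih (nxt r - r) (by omega) r (Gb r) (by omega) Ggood
        refine ⟨t, htsz, ?_⟩
        rw [← treeBlocksAt_eq_blk (by omega : 2 ≤ t.size) r]
        exact htb
    -- the sorted list of cut points
    set rs := (B0.erase a).sort (· ≤ ·) with hrsdef
    have hrs_to : rs.toFinset = B0.erase a := Finset.sort_toFinset _ _
    have hrs_mem : ∀ z, z ∈ rs ↔ z ∈ B0 ∧ z ≠ a := by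
      intro z
      rw [← List.mem_toFinset, hrs_to, Finset.mem_erase]
      tauto
    have hrs_sorted : rs.Pairwise (· < ·) := List.sortedLT_iff_pairwise.1 (Finset.sortedLT_sort (B0.erase a))
    have hrs_ne : rs ≠ [] := by
      intro h
      obtain ⟨z, hz⟩ := herane
      have : z ∈ rs := (hrs_mem z).2 (by
        rw [Finset.mem_erase] at hz
        exact ⟨hz.2, hz.1⟩)
      rw [h] at this
      exact List.not_mem_nil this
    have hrs_lt : ∀ z ∈ rs, a < z ∧ z < a + N := by
      intro z hz
      obtain ⟨hz1, hz2⟩ := (hrs_mem z).1 hz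
      have := G.sub B0 hB0 z hz1
      omega
    have hchain : (rs ++ [a + N]).Chain' (fun x y => nxt x = y) := by
      apply chain'_of_sorted
      · rw [List.pairwise_append]
        refine ⟨hrs_sorted, List.pairwise_singleton _ _, ?_⟩
        intro x hx y hy
        have : y = a + N := by simpa using hy
        subst this
        exact (hrs_lt x hx).2
      · intro x y hx hy hlt hno
        have hxrs : x ∈ rs := by
          rcases List.mem_append.1 hx with h | h
          · exact h
          · exfalso
            have hx' : x = a + N := by simpa using h
            rcases List.mem_append.1 hy with hh | hh
            · have := (hrs_lt y hh).2; omega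
            · have : y = a + N := by simpa using hh
              omega
        have hxB0 : x ∈ B0 := ((hrs_mem x).1 hxrs).1
        have hle : nxt x ≤ y := by
          rcases List.mem_append.1 hy with h | h
          · exact hnxt2 x y ((hrs_mem y).1 h).1 hlt
          · have : y = a + N := by simpa using h
            rw [this]
            exact hnxt4 x hxB0
        rcases Nat.eq_or_lt_of_le hle with h | h
        · exact h
        · exfalso
          rcases hnxt5 x with h5 | ⟨h5, h6⟩
          · have : y ≤ a + N := by
              rcases List.mem_append.1 hy with hh | hh
              · exact le_of_lt (hrs_lt y hh).2
              · have : y = a + N := by simpa using hh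
                omega
            omega
          · have hxa : a < x := (hrs_lt x hxrs).1
            have hmem : nxt x ∈ rs := (hrs_mem _).2 ⟨h5, by omega⟩
            exact hno (nxt x) (List.mem_append_left _ hmem) ⟨h6, h⟩
    have hex : ∀ r ∈ rs, ∃ t : PTree, t.size = nxt r - r ∧ r < nxt r ∧
        nBlocks (t.blk r) = Gb r := by
      intro r hr
      obtain ⟨h1, h2⟩ := (hrs_mem r).1 hr
      obtain ⟨t, ht1, ht2⟩ := hsubt r h1 h2
      exact ⟨t, ht1, hnxt1 r h1, ht2⟩
    obtain ⟨ts, hhle, hsz, hcr, hnb⟩ := assemble nxt Gb rs (a + N) hchain hex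
    have hhead : rs.headD (a + N) = a + 1 := by
      rw [← hb1eq]
      cases hrs' : rs with
      | nil => exact absurd hrs' hrs_ne
      | cons r0 rs0 =>
        simp only [List.headD_cons]
        have hr0 : r0 ∈ rs := by rw [hrs']; exact List.mem_cons_self
        obtain ⟨hr0B0, hr0a⟩ := (hrs_mem r0).1 hr0
        apply le_antisymm
        · have hb1rs : b1 ∈ rs := (hrs_mem b1).2 ⟨hb1mem, hb1ne⟩
          rw [hrs'] at hb1rs
          rcases List.mem_cons.1 hb1rs with h | h
          · omega
          · have hsorted' := hrs_sorted
            rw [hrs'] at hsorted'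
            have := (List.pairwise_cons.1 hsorted').1 b1 h
            omega
        · exact hb1le r0 hr0B0 hr0a
    rw [hhead] at hhle hsz hcr hnb
    have hts_ne : ts ≠ [] := by
      intro h
      rw [h] at hcr
      rw [childRoots] at hcr
      exact hrs_ne hcr.symm
    refine ⟨.node ts, ?_, ?_⟩
    · rw [size_node]
      omega
    · have h2 : treeBlocksAt (.node ts) a
          = (a :: childRoots ts (a + 1)) :: blkList ts (a + 1) := by
        cases ts with
        | nil => exact absurd rfl hts_ne
        | cons u us =>
          rw [treeBlocksAt_cons, blk_node]
          simp
      rw [h2, nBlocks_cons, hnb, hcr]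
      have hR : (a :: rs).toFinset = B0 := by
        rw [List.toFinset_cons, hrs_to]
        exact Finset.insert_erase haB0
      rw [hR]
      ext C
      constructor
      · intro hC
        rcases Finset.mem_insert.1 hC with rfl | hC
        · exact hB0
        · obtain ⟨r, hrrs, hCG⟩ := fold_mem.1 hC
          exact ((hGbmem r C).1 hCG).1
      · intro hC
        by_cases hCB0 : C = B0
        · rw [hCB0]
          exact Finset.mem_insert_self _ _
        · obtain ⟨r, hrB0, hra2, hb⟩ := hloc C hC hCB0
          exact Finset.mem_insert_of_mem (fold_mem.2
            ⟨r, (hrs_mem r).2 ⟨hrB0, hra2⟩, (hGbmem r C).2 ⟨hC, hCB0, hb⟩⟩)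

end NCLAux

namespace NCLAux

lemma treeBlocksAt_range {T : PTree} {a : ℕ} {l : List ℕ} (h : l ∈ treeBlocksAt T a) :
    ∀ x ∈ l, a ≤ x ∧ x < a + T.size := by
  cases T with
  | node ts =>
    cases ts with
    | nil =>
      rw [treeBlocksAt_nil] at h
      simp at h
      subst h
      intro x hx
      simp at hx
      subst hx
      rw [size_node, sizeList_nil]
      omega
    | cons t ts =>
      rw [treeBlocksAt_cons] at h
      exact blk_range h

lemma V_of_map {n : ℕ} {T : PTree} (hT : T.size = n) :
    VΓ (((treeBlocks T).map (listToBlock n)).toFinset) = nBlocks (treeBlocksAt T 0) := by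
  ext B'
  rw [mem_V, mem_nBlocks]
  constructor
  · rintro ⟨B, hB, rfl⟩
    rw [List.mem_toFinset, List.mem_map] at hB
    obtain ⟨l, hl, rfl⟩ := hB
    rw [treeBlocks_eq] at hl
    refine ⟨l, hl, ?_⟩
    rw [image_val_listToBlock]
    intro x hx
    have := treeBlocksAt_range hl x hx
    omega
  · rintro ⟨l, hl, rfl⟩
    refine ⟨listToBlock n l, ?_, ?_⟩
    · rw [List.mem_toFinset, List.mem_map]
      exact ⟨l, by rw [treeBlocks_eq]; exact hl, rfl⟩
    · rw [image_val_listToBlock]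
      intro x hx
      have := treeBlocksAt_range hl x hx
      omega

lemma treeBlocksAt_inj {T T' : PTree} (hs : T.size = T'.size)
    (h : nBlocks (treeBlocksAt T 0) = nBlocks (treeBlocksAt T' 0)) : T = T' := by
  cases T with
  | node ts =>
    cases T' with
    | node ts' =>
      cases ts with
      | nil =>
        cases ts' with
        | nil => rfl
        | cons t' us' =>
          exfalso
          rw [size_node, size_node, sizeList_nil, sizeList_cons] at hs
          have := size_pos t'
          omega
      | cons t us =>
        cases ts' with
        | nil =>
          exfalso
          rw [size_node, size_node, sizeList_nil, sizeList_cons] at hs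
          have := size_pos t
          omega
        | cons t' us' =>
          rw [treeBlocksAt_cons, treeBlocksAt_cons] at h
          exact blk_inj _ _ 0 hs h

end NCLAux


/-- There is a bijection `Θ` between the set `[1_n]` of connected non-crossing linked
partitions of `{1, …, n}` and the set of planar rooted trees with `n` vertices, under
which the blocks of `π` are exactly the vertex sets (a root together with its offsprings)
of the constituent elementary trees of `Θ(π)`, the vertices being numbered in
depth-first (left-first) order. -/
theorem connected_ncl_equiv_ptree (n : ℕ) (hn : 1 ≤ n) :
    ∃ Θ : {π : Finset (Finset (Fin n)) //
            IsNCL n π ∧ cPart n π = {(Finset.univ : Finset (Fin n))}} ≃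
          {T : PTree // T.size = n},
      ∀ π : {π : Finset (Finset (Fin n)) //
            IsNCL n π ∧ cPart n π = {(Finset.univ : Finset (Fin n))}},
        (π.1 : Finset (Finset (Fin n))) =
          ((treeBlocks (Θ π).1).map (listToBlock n)).toFinset := by
  classical
  have hf : ∀ T : {T : PTree // T.size = n},
      IsNCL n (((treeBlocks T.1).map (listToBlock n)).toFinset) ∧
        cPart n (((treeBlocks T.1).map (listToBlock n)).toFinset)
          = {(Finset.univ : Finset (Fin n))} := by
    intro T
    apply (NCLAux.bridge hn _).2
    rw [NCLAux.V_of_map T.2]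
    have := NCLAux.good_treeBlocksAt T.1 0
    rw [T.2] at this
    exact this
  set f : {T : PTree // T.size = n} → {π : Finset (Finset (Fin n)) //
      IsNCL n π ∧ cPart n π = {(Finset.univ : Finset (Fin n))}} :=
    fun T => ⟨((treeBlocks T.1).map (listToBlock n)).toFinset, hf T⟩ with hfdef
  have hinj : Function.Injective f := by
    intro T T' h
    have hval : ((treeBlocks T.1).map (listToBlock n)).toFinset
        = ((treeBlocks T'.1).map (listToBlock n)).toFinset := congrArg Subtype.val h
    have hV : NCLAux.nBlocks (NCLAux.treeBlocksAt T.1 0)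
        = NCLAux.nBlocks (NCLAux.treeBlocksAt T'.1 0) := by
      rw [← NCLAux.V_of_map T.2, ← NCLAux.V_of_map T'.2, hval]
    exact Subtype.ext (NCLAux.treeBlocksAt_inj (by rw [T.2, T'.2]) hV)
  have hsurj : Function.Surjective f := by
    rintro ⟨π, hπ⟩
    have G : NCLAux.Good 0 n (NCLAux.VΓ π) := (NCLAux.bridge hn π).1 hπ
    obtain ⟨T, hTsz, hTb⟩ := NCLAux.nsurj n 0 (NCLAux.VΓ π) hn G
    refine ⟨⟨T, hTsz⟩, ?_⟩
    apply Subtype.ext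
    apply NCLAux.V_inj
    show NCLAux.VΓ (((treeBlocks T).map (listToBlock n)).toFinset) = NCLAux.VΓ π
    rw [NCLAux.V_of_map hTsz, hTb]
  refine ⟨(Equiv.ofBijective f ⟨hinj, hsurj⟩).symm, ?_⟩
  intro π
  have := (Equiv.ofBijective f ⟨hinj, hsurj⟩).apply_symm_apply π
  exact (congrArg Subtype.val this).symm
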